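/- arXiv:1603.08310 — 8 statements merged into one kernel-verified Lean document; each statement's English description precedes it below -/
import Mathlib

section
/- Let G₁ and G₂ be finite simple graphs. The following are equivalent: (i) for every natural number n, G₁ and G₂ have the same number of regular n-colorings (i.e., χ(G₁,t) = χ(G₂,t)); (ii) there exists a family of bijections f_S : χ(G₁,S) → χ(G₂,S), indexed by all sets S (in a fixed universe), which is natural with respect to injections, i.e., f_T(ι ∘ c) = ι ∘ f_S(c) for every injection ι : S → T and every c ∈ χ(G₁,S). -/
/-- The set `χ(G,S)` of regular `S`-colorings of `G`. -/
abbrev RegColoring {V : Type} (G : SimpleGraph V) (S : Type) : Type :=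
  {c : V → S // ∀ v u : V, G.Adj v u → c v ≠ c u}

/-- The action of the chromatic functor on an injection `ι : S → T`:
postcomposition `c ↦ ι ∘ c`. -/
def pushColoring {V : Type} (G : SimpleGraph V) {S T : Type} (ι : S → T)
    (hι : Function.Injective ι) (c : RegColoring G S) : RegColoring G T :=
  ⟨ι ∘ c.1, fun v u h hh => c.2 v u h (hι hh)⟩

section FreeAction
variable {G α β : Type} [Group G] [MulAction G α] [MulAction G β]

noncomputable def freeDecomp (hfree : ∀ (g : G) (x : α), g • x = x → g = 1) :
    { e : α ≃ Quotient (MulAction.orbitRel G α) × G //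
      ∀ (g : G) (x : α), e (g • x) = ((e x).1, g * (e x).2) } := by
  classical
  have key : ∀ x : α, ∃! g : G, g • (Quotient.mk (MulAction.orbitRel G α) x).out = x := by
    intro x
    have hx : (Quotient.mk (MulAction.orbitRel G α) x).out ∈ MulAction.orbit G x :=
      MulAction.orbitRel_apply.mp (Quotient.mk_out x)
    obtain ⟨g, hg⟩ := hx
    simp only at hg
    refine ⟨g⁻¹, by rw [← hg]; simp, ?_⟩
    intro h hh
    have : (h * g) • x = x := by rw [mul_smul, hg]; exact hh
    exact eq_inv_of_mul_eq_one_left (hfree _ _ this)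
  let sel : α → G := fun x => (key x).choose
  have hsel : ∀ x : α, sel x • (Quotient.mk (MulAction.orbitRel G α) x).out = x :=
    fun x => (key x).choose_spec.1
  have hmk : ∀ (x : α) (g : G), Quotient.mk (MulAction.orbitRel G α) (g • x)
      = Quotient.mk (MulAction.orbitRel G α) x := by
    intro x g
    exact Quotient.sound (MulAction.orbitRel_apply.mpr ⟨g, rfl⟩)
  have hsel_smul : ∀ (x : α) (g : G), sel (g • x) = g * sel x := by
    intro x g
    have h1 := hsel (g • x)
    rw [hmk x g] at h1
    have h2 : (g * sel x) • (Quotient.mk (MulAction.orbitRel G α) x).out = g • x := by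
      rw [mul_smul, hsel]
    -- uniqueness
    exact ((key (g • x)).choose_spec.2 (g * sel x) (by rw [hmk x g]; exact h2)).symm
  refine ⟨⟨fun x => (Quotient.mk _ x, sel x),
    fun p => p.2 • p.1.out, ?_, ?_⟩, ?_⟩
  · intro x; simp only; rw [hsel]
  · rintro ⟨q, g⟩
    simp only
    have hq : Quotient.mk (MulAction.orbitRel G α) (g • q.out) = q := by
      rw [hmk, Quotient.out_eq]
    refine Prod.ext hq ?_
    have h1 : sel (g • q.out) = g * sel q.out := hsel_smul _ _
    have h2 : sel q.out = 1 := by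
      have := hsel q.out
      -- sel q.out • ⟦q.out⟧.out = q.out ; and ⟦q.out⟧ = q so out = q.out
      rw [Quotient.out_eq] at this
      exact hfree _ _ this
    simp [h1, h2]
  · intro g x
    simp only [Equiv.coe_fn_mk, hmk, hsel_smul]
end FreeAction

theorem exists_equivariant_equiv {G α β : Type} [Group G] [MulAction G α] [MulAction G β]
    [Finite G] [Finite α] [Finite β]
    (hα : ∀ (g : G) (x : α), g • x = x → g = 1)
    (hβ : ∀ (g : G) (x : β), g • x = x → g = 1)
    (hcard : Nat.card α = Nat.card β) :
    ∃ e : α ≃ β, ∀ (g : G) (x : α), e (g • x) = g • e x := by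
  obtain ⟨eα, heα⟩ := freeDecomp hα
  obtain ⟨eβ, heβ⟩ := freeDecomp hβ
  have hq : Nat.card (Quotient (MulAction.orbitRel G α)) =
      Nat.card (Quotient (MulAction.orbitRel G β)) := by
    have h1 := Nat.card_congr eα
    have h2 := Nat.card_congr eβ
    rw [Nat.card_prod] at h1 h2
    have hG : 0 < Nat.card G := Nat.card_pos
    exact Nat.eq_of_mul_eq_mul_right hG (by omega)
  have : Nonempty (Quotient (MulAction.orbitRel G α) ≃ Quotient (MulAction.orbitRel G β)) := by
    refine ⟨(Finite.equivFin _).trans (?_)⟩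
    rw [hq]
    exact (Finite.equivFin _).symm
  obtain ⟨eq⟩ := this
  refine ⟨eα.trans ((Equiv.prodCongr eq (Equiv.refl G)).trans eβ.symm), ?_⟩
  intro g x
  simp only [Equiv.trans_apply, heα, Equiv.prodCongr_apply, Equiv.coe_refl, Prod.map]
  apply eβ.injective
  rw [Equiv.apply_symm_apply, heβ, Equiv.apply_symm_apply]; rfl


@[simp] lemma pushColoring_val {V : Type} (G : SimpleGraph V) {S T : Type} (ι : S → T)
    (hι : Function.Injective ι) (c : RegColoring G S) :
    (pushColoring G ι hι c).1 = ι ∘ c.1 := rfl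

lemma pushColoring_comp {V : Type} (G : SimpleGraph V) {S T U : Type} (ι : S → T)
    (hι : Function.Injective ι) (κ : T → U) (hκ : Function.Injective κ)
    (c : RegColoring G S) :
    pushColoring G κ hκ (pushColoring G ι hι c) = pushColoring G (κ ∘ ι) (hκ.comp hι) c := rfl

abbrev SurjColoring {V : Type} (G : SimpleGraph V) (k : ℕ) : Type :=
  {c : RegColoring G (Fin k) // Function.Surjective c.1}

instance surjSMul {V : Type} (G : SimpleGraph V) (k : ℕ) :
    SMul (Equiv.Perm (Fin k)) (SurjColoring G k) :=
  ⟨fun σ c => ⟨pushColoring G σ σ.injective c.1, σ.surjective.comp c.2⟩⟩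

@[simp] lemma surj_smul_val {V : Type} {G : SimpleGraph V} {k : ℕ} (σ : Equiv.Perm (Fin k))
    (c : SurjColoring G k) : (σ • c).1.1 = σ ∘ c.1.1 := rfl

instance surjMulAction {V : Type} (G : SimpleGraph V) (k : ℕ) :
    MulAction (Equiv.Perm (Fin k)) (SurjColoring G k) where
  one_smul c := by apply Subtype.ext; apply Subtype.ext; rfl
  mul_smul σ τ c := by apply Subtype.ext; apply Subtype.ext; rfl

lemma surj_free {V : Type} {G : SimpleGraph V} {k : ℕ} (σ : Equiv.Perm (Fin k))
    (c : SurjColoring G k) (h : σ • c = c) : σ = 1 := by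
  ext x
  obtain ⟨v, rfl⟩ := c.2 x
  exact congrArg Fin.val (by simpa using congrArg (fun d => d.1.1 v) h)

lemma nat_card_sigma {ι : Type} [Fintype ι] (f : ι → Type) [∀ i, Finite (f i)] :
    Nat.card (Σ i, f i) = ∑ i, Nat.card (f i) := by
  have : ∀ i, Fintype (f i) := fun i => Fintype.ofFinite (f i)
  simp only [Nat.card_eq_fintype_card]
  exact Fintype.card_sigma

/-- colorings with image exactly `A` are in bijection with surjective colorings onto
`Fin A.card`. -/
noncomputable def fiberEquiv {V : Type} [Fintype V] (G : SimpleGraph V) {n : ℕ}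
    (A : Finset (Fin n)) :
    {c : RegColoring G (Fin n) // Finset.image c.1 Finset.univ = A} ≃ SurjColoring G A.card := by
  classical
  let eA : ↥A ≃ Fin A.card := A.equivFin
  have mem : ∀ (c : {c : RegColoring G (Fin n) // Finset.image c.1 Finset.univ = A}) (v : V),
      c.1.1 v ∈ A := by
    intro c v
    have := Finset.mem_image_of_mem c.1.1 (Finset.mem_univ v)
    rwa [c.2] at this
  refine ⟨fun c => ⟨⟨fun v => eA ⟨c.1.1 v, mem c v⟩, ?_⟩, ?_⟩,
    fun d => ⟨⟨fun v => (eA.symm (d.1.1 v)).1, ?_⟩, ?_⟩, ?_, ?_⟩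
  · intro v u h hh
    exact c.1.2 v u h (congrArg Subtype.val (eA.injective hh))
  · intro x
    have ha : (eA.symm x).1 ∈ Finset.image c.1.1 Finset.univ := by
      rw [c.2]; exact (eA.symm x).2
    obtain ⟨v, -, hv⟩ := Finset.mem_image.mp ha
    refine ⟨v, ?_⟩
    show eA ⟨c.1.1 v, mem c v⟩ = x
    have : (⟨c.1.1 v, mem c v⟩ : ↥A) = eA.symm x := Subtype.ext hv
    rw [this, Equiv.apply_symm_apply]
  · intro v u h hh
    simp only at hh
    exact d.1.2 v u h (eA.symm.injective (Subtype.ext hh))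
  · ext a
    simp only [Finset.mem_image, Finset.mem_univ, true_and]
    constructor
    · rintro ⟨v, rfl⟩; exact (eA.symm (d.1.1 v)).2
    · intro ha
      obtain ⟨v, hv⟩ := d.2 (eA ⟨a, ha⟩)
      exact ⟨v, by rw [hv]; simp⟩
  · intro c
    apply Subtype.ext; apply Subtype.ext; funext v; simp
  · intro d
    apply Subtype.ext; apply Subtype.ext; funext v; simp

lemma card_eq_sum_surj {V : Type} [Fintype V] (G : SimpleGraph V) (n : ℕ) :
    Nat.card (RegColoring G (Fin n)) =
      ∑ A : Finset (Fin n), Nat.card (SurjColoring G A.card) := by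
  classical
  have e := (Equiv.sigmaFiberEquiv
    (fun c : RegColoring G (Fin n) => Finset.image c.1 Finset.univ)).symm
  rw [Nat.card_congr e, nat_card_sigma]
  exact Finset.sum_congr rfl fun A _ => Nat.card_congr (fiberEquiv G A)

lemma surj_card_eq {V₁ V₂ : Type} [Fintype V₁] [Fintype V₂]
    (G₁ : SimpleGraph V₁) (G₂ : SimpleGraph V₂)
    (h : ∀ n : ℕ, Nat.card (RegColoring G₁ (Fin n)) = Nat.card (RegColoring G₂ (Fin n)))
    (k : ℕ) : Nat.card (SurjColoring G₁ k) = Nat.card (SurjColoring G₂ k) := by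
  induction k using Nat.strong_induction_on with
  | _ k ih =>
    have hk := h k
    rw [card_eq_sum_surj, card_eq_sum_surj] at hk
    classical
    rw [← Finset.add_sum_erase _ _ (Finset.mem_univ (Finset.univ : Finset (Fin k))),
        ← Finset.add_sum_erase _ _ (Finset.mem_univ (Finset.univ : Finset (Fin k)))] at hk
    have hrest : ∑ A ∈ Finset.univ.erase (Finset.univ : Finset (Fin k)),
          Nat.card (SurjColoring G₁ A.card)
        = ∑ A ∈ Finset.univ.erase (Finset.univ : Finset (Fin k)),
          Nat.card (SurjColoring G₂ A.card) := by
      refine Finset.sum_congr rfl fun A hA => ?_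
      have hne : A ≠ Finset.univ := (Finset.mem_erase.mp hA).1
      have : A.card < k := by
        have := Finset.card_lt_card (Finset.ssubset_univ_iff.mpr hne)
        simpa using this
      exact ih _ this
    simp only [Finset.card_univ, Fintype.card_fin] at hk
    omega

/-- Present a coloring as an injection composed with a surjective coloring. -/
noncomputable def present {V₁ S : Type} [Fintype V₁] (G₁ : SimpleGraph V₁)
    (c : RegColoring G₁ S) :
    Σ' (k : ℕ) (j : Fin k → S) (hj : Function.Injective j) (d : SurjColoring G₁ k),
      c = pushColoring G₁ j hj d.1 := by
  classical
  haveI : Finite ↥(Set.range c.1) := (Set.finite_range c.1).to_subtype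
  let k := Nat.card ↥(Set.range c.1)
  let β : ↥(Set.range c.1) ≃ Fin k := Finite.equivFin _
  refine ⟨k, Subtype.val ∘ β.symm, Subtype.val_injective.comp β.symm.injective,
    ⟨⟨fun v => β (Set.rangeFactorization c.1 v), ?_⟩, ?_⟩, ?_⟩
  · intro v u h hh
    exact c.2 v u h (congrArg Subtype.val (β.injective hh))
  · exact β.surjective.comp Set.rangeFactorization_surjective
  · apply Subtype.ext
    funext v
    simp [Set.rangeFactorization]

noncomputable def transfer {V₁ V₂ : Type} [Fintype V₁] (G₁ : SimpleGraph V₁)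
    (G₂ : SimpleGraph V₂) (g : ∀ k, SurjColoring G₁ k → SurjColoring G₂ k)
    (S : Type) (c : RegColoring G₁ S) : RegColoring G₂ S :=
  pushColoring G₂ (present G₁ c).2.1 (present G₁ c).2.2.1 (g _ (present G₁ c).2.2.2.1).1

lemma transfer_spec {V₁ V₂ : Type} [Fintype V₁] (G₁ : SimpleGraph V₁)
    (G₂ : SimpleGraph V₂) (g : ∀ k, SurjColoring G₁ k → SurjColoring G₂ k)
    (S : Type) (c : RegColoring G₁ S) :
    ∃ (k : ℕ) (j : Fin k → S) (hj : Function.Injective j) (d : SurjColoring G₁ k),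
      c = pushColoring G₁ j hj d.1 ∧
      transfer G₁ G₂ g S c = pushColoring G₂ j hj (g k d).1 :=
  ⟨(present G₁ c).1, (present G₁ c).2.1, (present G₁ c).2.2.1, (present G₁ c).2.2.2.1,
    (present G₁ c).2.2.2.2, rfl⟩

lemma pres_card_eq {V₁ S : Type} {G₁ : SimpleGraph V₁} {k₁ k₂ : ℕ}
    {j₁ : Fin k₁ → S} (hj₁ : Function.Injective j₁) {j₂ : Fin k₂ → S}
    (hj₂ : Function.Injective j₂) {d₁ : SurjColoring G₁ k₁} {d₂ : SurjColoring G₁ k₂}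
    (h : j₁ ∘ d₁.1.1 = j₂ ∘ d₂.1.1) : k₁ = k₂ := by
  have hr : Set.range j₁ = Set.range j₂ := by
    rw [← d₁.2.range_comp j₁, ← d₂.2.range_comp j₂, h]
  have h1 : Nat.card ↥(Set.range j₁) = k₁ := by
    rw [Nat.card_range_of_injective hj₁, Nat.card_eq_fintype_card, Fintype.card_fin]
  have h2 : Nat.card ↥(Set.range j₂) = k₂ := by
    rw [Nat.card_range_of_injective hj₂, Nat.card_eq_fintype_card, Fintype.card_fin]
  rw [← h1, ← h2, hr]

lemma push_g_eq {V₁ V₂ S : Type} {G₁ : SimpleGraph V₁} {G₂ : SimpleGraph V₂}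
    (g : ∀ k, SurjColoring G₁ k → SurjColoring G₂ k)
    (hg : ∀ (k : ℕ) (σ : Equiv.Perm (Fin k)) (d : SurjColoring G₁ k), g k (σ • d) = σ • g k d)
    {k : ℕ} {j₁ : Fin k → S} (hj₁ : Function.Injective j₁) {j₂ : Fin k → S}
    (hj₂ : Function.Injective j₂) {d₁ d₂ : SurjColoring G₁ k}
    (h : j₁ ∘ d₁.1.1 = j₂ ∘ d₂.1.1) :
    pushColoring G₂ j₁ hj₁ (g k d₁).1 = pushColoring G₂ j₂ hj₂ (g k d₂).1 := by
  have hr : Set.range j₁ = Set.range j₂ := by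
    rw [← d₁.2.range_comp j₁, ← d₂.2.range_comp j₂, h]
  let σ : Equiv.Perm (Fin k) :=
    (Equiv.ofInjective j₁ hj₁).trans ((Equiv.setCongr hr).trans (Equiv.ofInjective j₂ hj₂).symm)
  have hσ : ∀ x, j₂ (σ x) = j₁ x := by
    intro x
    show j₂ ((Equiv.ofInjective j₂ hj₂).symm _) = j₁ x
    rw [Equiv.apply_ofInjective_symm hj₂]
    rfl
  have hd : σ • d₁ = d₂ := by
    apply Subtype.ext; apply Subtype.ext
    funext v
    apply hj₂
    show j₂ (σ (d₁.1.1 v)) = j₂ (d₂.1.1 v)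
    rw [hσ]
    exact congrFun h v
  apply Subtype.ext
  funext v
  show j₁ ((g k d₁).1.1 v) = j₂ ((g k d₂).1.1 v)
  rw [← hd, hg, ← hσ]
  rfl

lemma transfer_char {V₁ V₂ : Type} [Fintype V₁] (G₁ : SimpleGraph V₁)
    (G₂ : SimpleGraph V₂) (g : ∀ k, SurjColoring G₁ k → SurjColoring G₂ k)
    (hg : ∀ (k : ℕ) (σ : Equiv.Perm (Fin k)) (d : SurjColoring G₁ k), g k (σ • d) = σ • g k d)
    (S : Type) (k : ℕ) (j : Fin k → S) (hj : Function.Injective j) (d : SurjColoring G₁ k) :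
    transfer G₁ G₂ g S (pushColoring G₁ j hj d.1) = pushColoring G₂ j hj (g k d).1 := by
  obtain ⟨k₀, j₀, hj₀, d₀, hpres, heq⟩ := transfer_spec G₁ G₂ g S (pushColoring G₁ j hj d.1)
  have hfun : j₀ ∘ d₀.1.1 = j ∘ d.1.1 := congrArg Subtype.val hpres.symm
  obtain rfl : k₀ = k := pres_card_eq hj₀ hj hfun
  rw [heq]
  exact push_g_eq g hg hj₀ hj hfun

/-- For finite simple graphs `G₁, G₂`, the following are equivalent: (i) for every `n`,
`G₁` and `G₂` have the same number of regular `n`-colorings; (ii) there is a family of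
bijections `f_S : χ(G₁,S) → χ(G₂,S)`, indexed by all sets `S` in a fixed universe, natural
with respect to injections. -/
theorem stmt4 {V₁ V₂ : Type} [Fintype V₁] [Fintype V₂]
    (G₁ : SimpleGraph V₁) (G₂ : SimpleGraph V₂) :
    (∀ n : ℕ, Nat.card (RegColoring G₁ (Fin n)) = Nat.card (RegColoring G₂ (Fin n))) ↔
    (∃ f : ∀ S : Type, RegColoring G₁ S → RegColoring G₂ S,
      (∀ S : Type, Function.Bijective (f S)) ∧
      ∀ (S T : Type) (ι : S → T) (hι : Function.Injective ι) (c : RegColoring G₁ S),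
        f T (pushColoring G₁ ι hι c) = pushColoring G₂ ι hι (f S c)) := by
  constructor
  · intro h
    -- choose equivariant bijections on surjective colorings
    have hEx : ∀ k : ℕ, ∃ e : SurjColoring G₁ k ≃ SurjColoring G₂ k,
        ∀ (σ : Equiv.Perm (Fin k)) (x : SurjColoring G₁ k), e (σ • x) = σ • e x := by
      intro k
      exact exists_equivariant_equiv surj_free surj_free (surj_card_eq G₁ G₂ h k)
    choose e he using hEx
    have he' : ∀ (k : ℕ) (σ : Equiv.Perm (Fin k)) (y : SurjColoring G₂ k),
        (e k).symm (σ • y) = σ • (e k).symm y := by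
      intro k σ y
      apply (e k).injective
      rw [Equiv.apply_symm_apply, he, Equiv.apply_symm_apply]
    set g : ∀ k, SurjColoring G₁ k → SurjColoring G₂ k := fun k => e k with hg
    set g' : ∀ k, SurjColoring G₂ k → SurjColoring G₁ k := fun k => (e k).symm with hg'
    refine ⟨transfer G₁ G₂ g, fun S => ?_, ?_⟩
    · rw [Function.bijective_iff_has_inverse]
      refine ⟨transfer G₂ G₁ g' S, ?_, ?_⟩
      · intro c
        obtain ⟨k, j, hj, d, hpres, heq⟩ := transfer_spec G₁ G₂ g S c
        rw [heq, transfer_char G₂ G₁ g' he' S k j hj (g k d),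
          show g' k (g k d) = d from (e k).symm_apply_apply d]
        exact hpres.symm
      · intro c
        obtain ⟨k, j, hj, d, hpres, heq⟩ := transfer_spec G₂ G₁ g' S c
        rw [heq, transfer_char G₁ G₂ g he S k j hj (g' k d),
          show g k (g' k d) = d from (e k).apply_symm_apply d]
        exact hpres.symm
    · intro S T ι hι c
      obtain ⟨k, j, hj, d, hpres, heq⟩ := transfer_spec G₁ G₂ g S c
      rw [heq, hpres, pushColoring_comp, pushColoring_comp,
        transfer_char G₁ G₂ g he T k (ι ∘ j) (hι.comp hj) d]
  · intro ⟨f, hbij, _⟩ n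
    exact Nat.card_eq_of_bijective (f (Fin n)) (hbij (Fin n))
end

section
/- Let 𝔛 = (X_i)_{i∈I} and 𝔜 = (Y_j)_{j∈J} be families of sets. There is a bijection between Isom(𝔛,𝔜) — the set of pairs (α;(α_i)_{i∈I}) where α : I → J is a bijection and each α_i : X_i → Y_{α(i)} is a bijection — and the set of natural isomorphisms from F_𝔛 to F_𝔜, where F_𝔛 assigns to a set S the disjoint union ⨆_{i∈I} Inj(X_i,S) and to an injection ι : S → T the map given by postcomposition with ι, and a natural isomorphism F_𝔛 → F_𝔜 is a family of bijections f_S : F_𝔛(S) → F_𝔜(S), indexed by all sets S, satisfying f_T ∘ ι_* = ι_* ∘ f_S for every injection ι : S → T. The bijection sends (α;(α_i)) to the natural isomorphism whose component at S maps c ∈ Inj(X_i,S) to c ∘ α_i⁻¹ ∈ Inj(Y_{α(i)},S). -/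
/-- The value `F_𝔛(S) = ⨆_{i∈I} Inj(X_i, S)` of the functor associated to a family of
sets `𝔛 = (X_i)_{i∈I}`. -/
abbrev FamFunctor {I : Type} (X : I → Type) (S : Type) : Type :=
  Σ i : I, {f : X i → S // Function.Injective f}

/-- The action of `F_𝔛` on an injection `ι : S → T`: postcomposition with `ι` on each
summand. -/
def famMap {I : Type} (X : I → Type) {S T : Type} (ι : S → T) (hι : Function.Injective ι)
    (x : FamFunctor X S) : FamFunctor X T :=
  ⟨x.1, ⟨ι ∘ x.2.1, hι.comp x.2.2⟩⟩

/-- An isomorphism of families of sets: a bijection `α : I → J` together with bijections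
`α_i : X_i → Y_{α(i)}`. -/
abbrev FamIsom {I J : Type} (X : I → Type) (Y : J → Type) : Type :=
  Σ α : I ≃ J, ∀ i : I, X i ≃ Y (α i)

/-- A natural isomorphism `F_𝔛 → F_𝔜`: a family of bijections `f_S`, indexed by all
sets `S`, commuting with postcomposition by injections. -/
abbrev NatIsoFam {I J : Type} (X : I → Type) (Y : J → Type) : Type 1 :=
  {f : ∀ S : Type, FamFunctor X S → FamFunctor Y S //
    (∀ S : Type, Function.Bijective (f S)) ∧
    ∀ (S T : Type) (ι : S → T) (hι : Function.Injective ι) (x : FamFunctor X S),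
      f T (famMap X ι hι x) = famMap Y ι hι (f S x)}

namespace Stmt5Aux

variable {I J : Type} {X : I → Type} {Y : J → Type}

def idElt (X : I → Type) (i : I) : FamFunctor X (X i) :=
  ⟨i, ⟨id, fun _ _ h => h⟩⟩

lemma key (f : NatIsoFam X Y) {S : Type} (i : I) (c : X i → S) (hc : Function.Injective c) :
    f.1 S ⟨i, ⟨c, hc⟩⟩ = famMap Y c hc (f.1 (X i) (idElt X i)) :=
  f.2.2 (X i) S c hc (idElt X i)

noncomputable def gFun (f : NatIsoFam X Y) (S : Type) : FamFunctor Y S → FamFunctor X S :=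
  Function.surjInv (f.2.1 S).surjective

lemma gFun_left (f : NatIsoFam X Y) (S : Type) (x : FamFunctor X S) :
    gFun f S (f.1 S x) = x :=
  Function.leftInverse_surjInv (f.2.1 S) x

lemma gFun_right (f : NatIsoFam X Y) (S : Type) (y : FamFunctor Y S) :
    f.1 S (gFun f S y) = y :=
  Function.rightInverse_surjInv (f.2.1 S).surjective y

lemma gFun_bij (f : NatIsoFam X Y) (S : Type) : Function.Bijective (gFun f S) :=
  Function.bijective_iff_has_inverse.mpr ⟨f.1 S, gFun_right f S, gFun_left f S⟩

lemma gFun_nat (f : NatIsoFam X Y) (S T : Type) (ι : S → T) (hι : Function.Injective ι)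
    (y : FamFunctor Y S) :
    gFun f T (famMap Y ι hι y) = famMap X ι hι (gFun f S y) := by
  apply (f.2.1 T).injective
  rw [gFun_right, f.2.2, gFun_right]

noncomputable def gNat (f : NatIsoFam X Y) : NatIsoFam Y X :=
  ⟨gFun f, gFun_bij f, gFun_nat f⟩

noncomputable def αf (f : NatIsoFam X Y) (i : I) : J := (f.1 (X i) (idElt X i)).1

noncomputable def uf (f : NatIsoFam X Y) (i : I) : Y (αf f i) → X i :=
  (f.1 (X i) (idElt X i)).2.1

lemma uf_inj (f : NatIsoFam X Y) (i : I) : Function.Injective (uf f i) :=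
  (f.1 (X i) (idElt X i)).2.2

noncomputable def βf (f : NatIsoFam X Y) (j : J) : I := (gFun f (Y j) (idElt Y j)).1

noncomputable def vf (f : NatIsoFam X Y) (j : J) : X (βf f j) → Y j :=
  (gFun f (Y j) (idElt Y j)).2.1

lemma vf_inj (f : NatIsoFam X Y) (j : J) : Function.Injective (vf f j) :=
  (gFun f (Y j) (idElt Y j)).2.2

lemma comp1 (f : NatIsoFam X Y) (i : I) :
    (⟨βf f (αf f i), ⟨uf f i ∘ vf f (αf f i),
      (uf_inj f i).comp (vf_inj f (αf f i))⟩⟩ : FamFunctor X (X i)) = idElt X i :=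
  (key (gNat f) (αf f i) (uf f i) (uf_inj f i)).symm.trans (gFun_left f (X i) (idElt X i))

lemma comp2 (f : NatIsoFam X Y) (j : J) :
    (⟨αf f (βf f j), ⟨vf f j ∘ uf f (βf f j),
      (vf_inj f j).comp (uf_inj f (βf f j))⟩⟩ : FamFunctor Y (Y j)) = idElt Y j :=
  (key f (βf f j) (vf f j) (vf_inj f j)).symm.trans (gFun_right f (Y j) (idElt Y j))

lemma β_α (f : NatIsoFam X Y) (i : I) : βf f (αf f i) = i :=
  congrArg Sigma.fst (comp1 f i)

lemma α_β (f : NatIsoFam X Y) (j : J) : αf f (βf f j) = j :=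
  congrArg Sigma.fst (comp2 f j)

lemma sigma_eq_elim {K : Type} {Z : K → Type} {k : K} {p : FamFunctor Z (Z k)}
    (h : p = idElt Z k) (x : Z k) :
    p.2.1 (cast (congrArg Z (congrArg Sigma.fst h).symm) x) = x := by
  subst h; simp [idElt]; rfl

lemma uf_surj (f : NatIsoFam X Y) (i : I) : Function.Surjective (uf f i) := fun x =>
  ⟨vf f (αf f i) (cast (congrArg X (congrArg Sigma.fst (comp1 f i)).symm) x),
   sigma_eq_elim (comp1 f i) x⟩

noncomputable def fromNat (f : NatIsoFam X Y) : FamIsom X Y :=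
  ⟨⟨αf f, βf f, β_α f, α_β f⟩,
   fun i => (Equiv.ofBijective (uf f i) ⟨uf_inj f i, uf_surj f i⟩).symm⟩

def toNatFun (a : FamIsom X Y) (S : Type) (x : FamFunctor X S) : FamFunctor Y S :=
  ⟨a.1 x.1, ⟨x.2.1 ∘ ⇑(a.2 x.1).symm, x.2.2.comp (a.2 x.1).symm.injective⟩⟩

lemma toNatFun_bij (a : FamIsom X Y) (S : Type) : Function.Bijective (toNatFun a S) := by
  constructor
  · rintro ⟨i, c, hc⟩ ⟨i', c', hc'⟩ h
    have hi2 : i = i' := a.1.injective (congrArg Sigma.fst h)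
    subst hi2
    refine Sigma.ext rfl (heq_of_eq (Subtype.ext (funext fun x => ?_)))
    have h2 := eq_of_heq (Sigma.ext_iff.mp h).2
    have h3 := congrFun (congrArg Subtype.val h2) (a.2 i x)
    simpa [toNatFun] using h3
  · rintro ⟨j, d, hd⟩
    obtain ⟨i, rfl⟩ := a.1.surjective j
    refine ⟨⟨i, ⟨d ∘ a.2 i, hd.comp (a.2 i).injective⟩⟩,
      Sigma.ext rfl (heq_of_eq (Subtype.ext (funext fun y => ?_)))⟩
    simp [toNatFun]
    exact congrArg d ((a.2 i).apply_symm_apply y)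

def toNat (a : FamIsom X Y) : NatIsoFam X Y :=
  ⟨toNatFun a, toNatFun_bij a, fun _ _ _ _ _ => rfl⟩

lemma sigma_ext' {E e : I ≃ J} (A : ∀ i, X i ≃ Y (E i)) (s : ∀ i, X i ≃ Y (e i))
    (h : E = e) (h2 : ∀ i x, (A i x : Y (E i)) =
      cast (congrArg Y (by rw [h] : e i = E i)) (s i x)) :
    (⟨E, A⟩ : FamIsom X Y) = ⟨e, s⟩ := by
  subst h
  congr 1
  funext i
  exact Equiv.ext fun x => (h2 i x).trans (by simp)

lemma left_inv (a : FamIsom X Y) : fromNat (toNat a) = a := by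
  obtain ⟨e, s⟩ := a
  refine sigma_ext' _ _ (Equiv.ext fun i => rfl) (fun i x => ?_)
  show (Equiv.ofBijective (uf (toNat ⟨e, s⟩) i)
      ⟨uf_inj _ i, uf_surj _ i⟩).symm x = s i x
  apply uf_inj (toNat ⟨e, s⟩) i
  exact (Equiv.apply_symm_apply (Equiv.ofBijective _ _) x).trans
    ((s i).symm_apply_apply x).symm

lemma right_inv (f : NatIsoFam X Y) : toNat (fromNat f) = f := by
  apply Subtype.ext
  funext S x
  obtain ⟨i, c, hc⟩ := x
  rw [show f.1 S ⟨i, ⟨c, hc⟩⟩ = famMap Y c hc (f.1 (X i) (idElt X i)) from key f i c hc]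
  rfl

end Stmt5Aux

/-- There is a bijection between `Isom(𝔛,𝔜)` and the set of natural isomorphisms
`F_𝔛 → F_𝔜`, sending `(α;(α_i))` to the natural isomorphism whose component at `S` maps
`c ∈ Inj(X_i,S)` to `c ∘ α_i⁻¹ ∈ Inj(Y_{α(i)},S)`. -/
theorem stmt5 {I J : Type} (X : I → Type) (Y : J → Type) :
    ∃ B : FamIsom X Y ≃ NatIsoFam X Y,
      ∀ (a : FamIsom X Y) (S : Type) (x : FamFunctor X S),
        (B a).1 S x =
          ⟨a.1 x.1, ⟨x.2.1 ∘ ⇑(a.2 x.1).symm, x.2.2.comp (a.2 x.1).symm.injective⟩⟩ := by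
  classical
  exact ⟨⟨Stmt5Aux.toNat, Stmt5Aux.fromNat, Stmt5Aux.left_inv, Stmt5Aux.right_inv⟩,
    fun a S x => rfl⟩
end

section
/- Let 𝔛 = (X_i)_{i∈I} be a family of sets. The automorphism group Aut(𝔛) — pairs (α;(α_i)_{i∈I}) of a bijection α : I → I and bijections α_i : X_i → X_{α(i)}, under composition — is isomorphic as a group to the group Aut(F_𝔛) of natural automorphisms of the functor F_𝔛, i.e., families of bijections f_S : F_𝔛(S) → F_𝔛(S), indexed by all sets S, satisfying f_T ∘ ι_* = ι_* ∘ f_S for every injection ι : S → T, under componentwise composition. -/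
/-- An automorphism of the family `𝔛`: a bijection `α : I → I` together with bijections
`α_i : X_i → X_{α(i)}`. -/
abbrev FamAut {I : Type} (X : I → Type) : Type :=
  Σ α : I ≃ I, ∀ i : I, X i ≃ X (α i)

/-- Composition in `Aut(𝔛)`: `(β;(β_i)) ∘ (α;(α_i)) = (β∘α; (β_{α(i)}∘α_i))`. -/
def famComp {I : Type} {X : I → Type} (a b : FamAut X) : FamAut X :=
  ⟨b.1.trans a.1, fun i => (b.2 i).trans (a.2 (b.1 i))⟩

/-- A natural automorphism of `F_𝔛`: a family of bijections `f_S`, indexed by all sets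
`S`, commuting with postcomposition by injections. -/
abbrev NatAutFam {I : Type} (X : I → Type) : Type 1 :=
  {f : ∀ S : Type, FamFunctor X S → FamFunctor X S //
    (∀ S : Type, Function.Bijective (f S)) ∧
    ∀ (S T : Type) (ι : S → T) (hι : Function.Injective ι) (x : FamFunctor X S),
      f T (famMap X ι hι x) = famMap X ι hι (f S x)}

/-- Componentwise composition of natural automorphisms of `F_𝔛`. -/
def natComp {I : Type} {X : I → Type} (f g : NatAutFam X) : NatAutFam X :=
  ⟨fun S => f.1 S ∘ g.1 S,
   ⟨fun S => (f.2.1 S).comp (g.2.1 S),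
    fun S T ι hι x => by
      show f.1 T (g.1 T (famMap X ι hι x)) = famMap X ι hι (f.1 S (g.1 S x))
      rw [g.2.2 S T ι hι x, f.2.2 S T ι hι (g.1 S x)]⟩⟩

namespace Stmt6Aux

variable {I : Type} {X : I → Type}

/-- Fiber map: precompose with `e.symm`. -/
def fiberMap {A B S : Type} (e : A ≃ B) :
    {f : A → S // Function.Injective f} → {f : B → S // Function.Injective f} :=
  fun c => ⟨c.1 ∘ e.symm, c.2.comp e.symm.injective⟩

lemma fiberMap_inj {A B S : Type} (e : A ≃ B) :
    Function.Injective (fiberMap (S := S) e) := by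
  intro c d h
  apply Subtype.ext
  funext x
  have := congrFun (congrArg Subtype.val h) (e x)
  simpa [fiberMap] using this

lemma fiberMap_surj {A B S : Type} (e : A ≃ B) :
    Function.Surjective (fiberMap (S := S) e) := by
  intro d
  refine ⟨⟨d.1 ∘ e, d.2.comp e.injective⟩, ?_⟩
  apply Subtype.ext
  funext y
  simp [fiberMap]

lemma sigma_map_inj {β γ : I → Type} (σ : I → I) (hσ : Function.Injective σ)
    (F : ∀ i, β i → γ (σ i)) (hF : ∀ i, Function.Injective (F i)) :
    Function.Injective (fun x : Sigma β => (⟨σ x.1, F x.1 x.2⟩ : Sigma γ)) := by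
  rintro ⟨i, c⟩ ⟨j, d⟩ h
  have h1 : σ i = σ j := congrArg Sigma.fst h
  obtain rfl := hσ h1
  obtain rfl : c = d := hF i (by simpa using h)
  rfl

lemma sigma_map_surj {β γ : I → Type} (σ : I → I) (hσ : Function.Surjective σ)
    (F : ∀ i, β i → γ (σ i)) (hF : ∀ i, Function.Surjective (F i)) :
    Function.Surjective (fun x : Sigma β => (⟨σ x.1, F x.1 x.2⟩ : Sigma γ)) := by
  rintro ⟨j, d⟩
  obtain ⟨i, rfl⟩ := hσ j
  obtain ⟨c, rfl⟩ := hF i d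
  exact ⟨⟨i, c⟩, rfl⟩

def toNatFun (a : FamAut X) (S : Type) (x : FamFunctor X S) : FamFunctor X S :=
  ⟨a.1 x.1, fiberMap (a.2 x.1) x.2⟩

lemma toNatFun_bij (a : FamAut X) (S : Type) : Function.Bijective (toNatFun a S) := by
  constructor
  · have h := sigma_map_inj (β := fun i => {f : X i → S // Function.Injective f})
      (γ := fun i => {f : X i → S // Function.Injective f}) (fun i => a.1 i) a.1.injective
      (fun i => fiberMap (a.2 i)) (fun i => fiberMap_inj (a.2 i))
    exact h
  · have h := sigma_map_surj (β := fun i => {f : X i → S // Function.Injective f})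
      (γ := fun i => {f : X i → S // Function.Injective f}) (fun i => a.1 i) a.1.surjective
      (fun i => fiberMap (a.2 i)) (fun i => fiberMap_surj (a.2 i))
    exact h

def toNat (a : FamAut X) : NatAutFam X :=
  ⟨toNatFun a, toNatFun_bij a, fun _ _ _ _ _ => rfl⟩

def gen (X : I → Type) (i : I) : FamFunctor X (X i) :=
  ⟨i, ⟨id, Function.injective_id⟩⟩

lemma toNat_injective : Function.Injective (toNat (X := X)) := by
  rintro ⟨α, f⟩ ⟨β, g⟩ h
  have hval := congrArg Subtype.val h
  have key : ∀ i : I, toNatFun ⟨α, f⟩ (X i) (gen X i) = toNatFun ⟨β, g⟩ (X i) (gen X i) :=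
    fun i => congrFun (congrFun hval (X i)) (gen X i)
  have hαβ : α = β := by
    apply Equiv.ext
    intro i
    exact congrArg Sigma.fst (key i)
  subst hαβ
  have hfg : f = g := by
    funext i
    have h2 := key i
    have h3 : fiberMap (S := X i) (f i) (gen X i).2 = fiberMap (g i) (gen X i).2 := by
      simpa [toNatFun, gen] using h2
    have h4 : ∀ y, (f i).symm y = (g i).symm y := by
      intro y
      have := congrFun (congrArg Subtype.val h3) y
      simpa [fiberMap, gen] using this
    have h5 : (f i).symm = (g i).symm := Equiv.ext h4
    have h6 := congrArg Equiv.symm h5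
    simpa using h6
  rw [hfg]

lemma heq_snd {S : Type} {x y : FamFunctor X S} (h : x = y) : HEq x.2.1 y.2.1 := by
  subst h; rfl

lemma surj_of_comp_heq {A B C : Type} (hAC : A = C) (p : B → C) (q : A → B)
    (h : HEq (p ∘ q) (id : C → C)) : Function.Surjective p := by
  subst hAC
  intro y
  exact ⟨q y, congrFun (eq_of_heq h) y⟩

/-- The bijection `f_S` as an `Equiv`. -/
noncomputable def eqS (f : NatAutFam X) (S : Type) : FamFunctor X S ≃ FamFunctor X S :=
  Equiv.ofBijective (f.1 S) (f.2.1 S)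

lemma inv_nat (f : NatAutFam X) (S T : Type) (ι : S → T) (hι : Function.Injective ι)
    (x : FamFunctor X S) :
    (eqS f T).symm (famMap X ι hι x) = famMap X ι hι ((eqS f S).symm x) := by
  apply (eqS f T).injective
  rw [Equiv.apply_symm_apply]
  show famMap X ι hι x = f.1 T (famMap X ι hι ((eqS f S).symm x))
  rw [f.2.2 S T ι hι]
  show famMap X ι hι x = famMap X ι hι (eqS f S ((eqS f S).symm x))
  rw [Equiv.apply_symm_apply]

def gval (f : NatAutFam X) (i : I) : FamFunctor X (X i) := f.1 (X i) (gen X i)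

noncomputable def gval' (f : NatAutFam X) (i : I) : FamFunctor X (X i) := (eqS f (X i)).symm (gen X i)

lemma det (f : NatAutFam X) (S : Type) (x : FamFunctor X S) :
    f.1 S x = famMap X x.2.1 x.2.2 (gval f x.1) := by
  have hx : x = famMap X x.2.1 x.2.2 (gen X x.1) := rfl
  calc f.1 S x = f.1 S (famMap X x.2.1 x.2.2 (gen X x.1)) := by rw [← hx]
    _ = famMap X x.2.1 x.2.2 (gval f x.1) := f.2.2 _ _ _ _ _

lemma det' (f : NatAutFam X) (S : Type) (x : FamFunctor X S) :
    (eqS f S).symm x = famMap X x.2.1 x.2.2 (gval' f x.1) := by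
  have hx : x = famMap X x.2.1 x.2.2 (gen X x.1) := rfl
  calc (eqS f S).symm x = (eqS f S).symm (famMap X x.2.1 x.2.2 (gen X x.1)) := by rw [← hx]
    _ = famMap X x.2.1 x.2.2 (gval' f x.1) := inv_nat f _ _ _ _ _

lemma key1 (f : NatAutFam X) (i : I) :
    famMap X (gval f i).2.1 (gval f i).2.2 (gval' f (gval f i).1) = gen X i := by
  rw [← det' f (X i) (gval f i)]
  show (eqS f (X i)).symm (eqS f (X i) (gen X i)) = gen X i
  exact (eqS f (X i)).symm_apply_apply _

lemma key2 (f : NatAutFam X) (i : I) :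
    famMap X (gval' f i).2.1 (gval' f i).2.2 (gval f (gval' f i).1) = gen X i := by
  rw [← det f (X i) (gval' f i)]
  show eqS f (X i) ((eqS f (X i)).symm (gen X i)) = gen X i
  exact (eqS f (X i)).apply_symm_apply _

lemma li (f : NatAutFam X) (i : I) : (gval' f (gval f i).1).1 = i :=
  congrArg Sigma.fst (key1 f i)

lemma ri (f : NatAutFam X) (i : I) : (gval f (gval' f i).1).1 = i :=
  congrArg Sigma.fst (key2 f i)

lemma usurj (f : NatAutFam X) (i : I) : Function.Surjective (gval f i).2.1 :=
  surj_of_comp_heq (congrArg X (li f i)) (gval f i).2.1 (gval' f (gval f i).1).2.1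
    (heq_snd (key1 f i))

/-- The family automorphism extracted from a natural automorphism. -/
noncomputable def ofNat (f : NatAutFam X) : FamAut X :=
  ⟨⟨fun i => (gval f i).1, fun i => (gval' f i).1, li f, ri f⟩,
   fun i => (Equiv.ofBijective (gval f i).2.1 ⟨(gval f i).2.2, usurj f i⟩).symm⟩

lemma toNat_surjective : Function.Surjective (toNat (X := X)) := by
  intro f
  refine ⟨ofNat f, ?_⟩
  apply Subtype.ext
  funext S x
  show toNatFun (ofNat f) S x = f.1 S x
  rw [det f S x]
  rfl

end Stmt6Aux


/-- `Aut(𝔛)` is isomorphic as a group to the group `Aut(F_𝔛)` of natural automorphisms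
of the functor `F_𝔛` (both taken with their composition operations). -/
theorem stmt6 {I : Type} (X : I → Type) :
    ∃ e : FamAut X ≃ NatAutFam X,
      ∀ a b : FamAut X, e (famComp a b) = natComp (e a) (e b) := by
  refine ⟨Equiv.ofBijective Stmt6Aux.toNat ⟨Stmt6Aux.toNat_injective, Stmt6Aux.toNat_surjective⟩,
    fun a b => ?_⟩
  rfl
end

section
/- Let G = (V,E) be a (possibly infinite) simple graph. The group Aut(χ(G,•)) of natural automorphisms of the chromatic functor of G is isomorphic to the direct product over all cardinal numbers κ of the wreath products 𝔖_κ ≀ 𝔖_{n_κ}, where n_κ is the cardinality of the set St_κ(G) of stable partitions of G of cardinality κ, 𝔖_κ is the symmetric group on a set of cardinality κ, and 𝔖_κ ≀ 𝔖_{n_κ} is the semidirect product (∏_{St_κ(G)} 𝔖_κ) ⋊ 𝔖_{St_κ(G)} with the symmetric group on St_κ(G) permuting coordinates. -/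
/-- A stable partition of a simple graph `G`. -/
def IsStablePartition {V : Type} (G : SimpleGraph V) (P : Set (Set V)) : Prop :=
  Setoid.IsPartition P ∧ ∀ b ∈ P, ∀ v ∈ b, ∀ u ∈ b, ¬ G.Adj v u

/-- A natural automorphism of the chromatic functor `χ(G,•)`: a family of bijections
`f_S : χ(G,S) → χ(G,S)`, indexed by all sets `S`, natural with respect to injections. -/
abbrev ChromNatAut {V : Type} (G : SimpleGraph V) : Type 1 :=
  {f : ∀ S : Type, RegColoring G S → RegColoring G S //
    (∀ S : Type, Function.Bijective (f S)) ∧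
    ∀ (S T : Type) (ι : S → T) (hι : Function.Injective ι) (c : RegColoring G S),
      f T (pushColoring G ι hι c) = pushColoring G ι hι (f S c)}

/-- Componentwise composition in `Aut(χ(G,•))`. -/
def chromComp {V : Type} {G : SimpleGraph V} (f g : ChromNatAut G) : ChromNatAut G :=
  ⟨fun S => f.1 S ∘ g.1 S,
   ⟨fun S => (f.2.1 S).comp (g.2.1 S),
    fun S T ι hι c => by
      show f.1 T (g.1 T (pushColoring G ι hι c)) = pushColoring G ι hι (f.1 S (g.1 S c))
      rw [g.2.2 S T ι hι c, f.2.2 S T ι hι (g.1 S c)]⟩⟩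

/-- A permutation `σ` of `ι` acts on the product group `ι → G` by permuting coordinates. -/
def permAut {ι : Type} (G : Type) [Group G] (σ : Equiv.Perm ι) : MulAut (ι → G) :=
  { toFun := fun f => f ∘ ⇑σ.symm
    invFun := fun f => f ∘ ⇑σ
    left_inv := fun f => by funext i; simp
    right_inv := fun f => by funext i; simp
    map_mul' := fun f g => rfl }

/-- The action of the symmetric group on `ι` on the product group `ι → G` permuting
coordinates, as a homomorphism into the automorphism group. -/
def permPiHom (ι : Type) (G : Type) [Group G] : Equiv.Perm ι →* MulAut (ι → G) where
  toFun := permAut G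
  map_one' := by apply MulEquiv.ext; intro f; rfl
  map_mul' := fun σ τ => by apply MulEquiv.ext; intro f; rfl

/-- The wreath product `𝔖_κ ≀ 𝔖_{St_κ(G)} = (∏_{St_κ(G)} 𝔖_κ) ⋊ 𝔖_{St_κ(G)}`, where
`St_κ(G)` is the set of stable partitions of `G` of cardinality `κ` and `𝔖_κ` is the
symmetric group on a set of cardinality `κ`. -/
abbrev stWreath {V : Type} (G : SimpleGraph V) (κ : Cardinal.{0}) : Type :=
  SemidirectProduct
    ({P : Set (Set V) // IsStablePartition G P ∧ Cardinal.mk P = κ} → Equiv.Perm (Quotient.out κ))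
    (Equiv.Perm {P : Set (Set V) // IsStablePartition G P ∧ Cardinal.mk P = κ})
    (permPiHom _ _)

instance stWreath.instGroup {V : Type} (G : SimpleGraph V) (κ : Cardinal.{0}) :
    Group (stWreath G κ) :=
  SemidirectProduct.instGroup

namespace Stmt8Aux

noncomputable section

open Function

variable {V : Type} (G : SimpleGraph V)

/-! ### Fibers and partitions of colorings -/

def fib {S : Type} (c : RegColoring G S) (v : V) : Set V := {u | c.1 u = c.1 v}

lemma mem_fib_self {S : Type} (c : RegColoring G S) (v : V) : v ∈ fib G c v := rfl

lemma fib_eq {S : Type} (c : RegColoring G S) {u v : V} (h : c.1 u = c.1 v) :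
    fib G c u = fib G c v := by
  ext x; simp only [fib, Set.mem_setOf_eq, h]

def part {S : Type} (c : RegColoring G S) : Set (Set V) := Set.range (fib G c)

lemma part_isStable {S : Type} (c : RegColoring G S) : IsStablePartition G (part G c) := by
  constructor
  · constructor
    · rintro ⟨v, hv⟩
      have := mem_fib_self G c v
      rw [hv] at this
      exact this
    · intro v
      refine ⟨fib G c v, ⟨⟨v, rfl⟩, mem_fib_self G c v⟩, ?_⟩
      rintro b ⟨⟨u, rfl⟩, hvb⟩
      exact fib_eq G c hvb.symm
  · rintro b ⟨u, rfl⟩ x hx y hy hadj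
    exact c.2 x y hadj (hx.trans hy.symm)

def rep {S : Type} (c : RegColoring G S) (b : ↥(part G c)) : V :=
  (Set.mem_range.mp b.2).choose

lemma fib_rep {S : Type} (c : RegColoring G S) (b : ↥(part G c)) :
    fib G c (rep G c b) = (b : Set V) :=
  (Set.mem_range.mp b.2).choose_spec

def colorOf {S : Type} (c : RegColoring G S) : ↥(part G c) → S := fun b => c.1 (rep G c b)

lemma colorOf_eq {S : Type} (c : RegColoring G S) (b : ↥(part G c)) {v : V}
    (hv : v ∈ (b : Set V)) : colorOf G c b = c.1 v := by
  have : v ∈ fib G c (rep G c b) := by rw [fib_rep]; exact hv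
  exact this.symm

lemma colorOf_inj {S : Type} (c : RegColoring G S) : Injective (colorOf G c) := by
  intro b b' h
  apply Subtype.ext
  rw [← fib_rep G c b, ← fib_rep G c b']
  exact fib_eq G c h

/-! ### Building colorings from stable partitions -/

def blockOf {P : Set (Set V)} (hP : IsStablePartition G P) (v : V) : ↥P :=
  ⟨(hP.1.2 v).choose, (hP.1.2 v).choose_spec.1.1⟩

lemma mem_blockOf {P : Set (Set V)} (hP : IsStablePartition G P) (v : V) :
    v ∈ (blockOf G hP v : Set V) :=
  (hP.1.2 v).choose_spec.1.2

lemma blockOf_eq {P : Set (Set V)} (hP : IsStablePartition G P) {v : V} {b : Set V}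
    (hb : b ∈ P) (hv : v ∈ b) : (blockOf G hP v : Set V) = b :=
  ((hP.1.2 v).choose_spec.2 b ⟨hb, hv⟩).symm

def mkCol {S : Type} (P : Set (Set V)) (hP : IsStablePartition G P) (j : ↥P → S)
    (hj : Injective j) : RegColoring G S :=
  ⟨fun v => j (blockOf G hP v), by
    intro v u hadj heq
    have hbu : blockOf G hP v = blockOf G hP u := hj heq
    refine hP.2 _ (blockOf G hP v).2 v (mem_blockOf G hP v) u ?_ hadj
    rw [hbu]; exact mem_blockOf G hP u⟩

lemma fib_mkCol {S : Type} (P : Set (Set V)) (hP : IsStablePartition G P) (j : ↥P → S)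
    (hj : Injective j) (v : V) :
    fib G (mkCol G P hP j hj) v = (blockOf G hP v : Set V) := by
  ext u
  simp only [fib, Set.mem_setOf_eq, mkCol]
  constructor
  · intro h
    have : blockOf G hP u = blockOf G hP v := hj h
    rw [← this]; exact mem_blockOf G hP u
  · intro hu
    have : blockOf G hP u = blockOf G hP v :=
      Subtype.ext (blockOf_eq G hP (blockOf G hP v).2 hu)
    rw [this]

lemma part_mkCol {S : Type} (P : Set (Set V)) (hP : IsStablePartition G P) (j : ↥P → S)
    (hj : Injective j) : part G (mkCol G P hP j hj) = P := by
  ext b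
  constructor
  · rintro ⟨v, rfl⟩
    rw [fib_mkCol]
    exact (blockOf G hP v).2
  · intro hb
    obtain ⟨v, hv⟩ := Setoid.nonempty_of_mem_partition hP.1 hb
    exact ⟨v, by rw [fib_mkCol]; exact blockOf_eq G hP hb hv⟩

lemma mkCol_apply_mem {S : Type} (P : Set (Set V)) (hP : IsStablePartition G P) (j : ↥P → S)
    (hj : Injective j) {v : V} {b : Set V} (hb : b ∈ P) (hv : v ∈ b) :
    (mkCol G P hP j hj).1 v = j ⟨b, hb⟩ := by
  show j (blockOf G hP v) = j ⟨b, hb⟩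
  congr 1
  exact Subtype.ext (blockOf_eq G hP hb hv)

lemma colorOf_mkCol {S : Type} (P : Set (Set V)) (hP : IsStablePartition G P) (j : ↥P → S)
    (hj : Injective j) (b : Set V) (h1 : b ∈ part G (mkCol G P hP j hj)) (h2 : b ∈ P) :
    colorOf G (mkCol G P hP j hj) ⟨b, h1⟩ = j ⟨b, h2⟩ := by
  obtain ⟨v, hv⟩ := Setoid.nonempty_of_mem_partition hP.1 h2
  rw [colorOf_eq G _ ⟨b, h1⟩ (v := v) hv]
  exact mkCol_apply_mem G P hP j hj h2 hv

lemma mkCol_part {S : Type} (c : RegColoring G S) :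
    mkCol G (part G c) (part_isStable G c) (colorOf G c) (colorOf_inj G c) = c := by
  apply Subtype.ext
  funext v
  exact colorOf_eq G c _ (mem_blockOf G (part_isStable G c) v)

lemma push_mkCol {S T : Type} (ι : S → T) (hι : Injective ι) (P : Set (Set V))
    (hP : IsStablePartition G P) (j : ↥P → S) (hj : Injective j) :
    pushColoring G ι hι (mkCol G P hP j hj) = mkCol G P hP (ι ∘ j) (hι.comp hj) := rfl

lemma mkCol_congr {S : Type} {P P' : Set (Set V)} {hP : IsStablePartition G P}
    {hP' : IsStablePartition G P'} {j : ↥P → S} {j' : ↥P' → S} {hj : Injective j}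
    {hj' : Injective j'} (h : P = P')
    (hjj : ∀ b (h1 : b ∈ P) (h2 : b ∈ P'), j ⟨b, h1⟩ = j' ⟨b, h2⟩) :
    mkCol G P hP j hj = mkCol G P' hP' j' hj' := by
  subst h
  obtain rfl : j = j' := funext fun b => hjj b.1 b.2 b.2
  rfl

lemma mkCol_inj_part {S : Type} {P P' : Set (Set V)} {hP : IsStablePartition G P}
    {hP' : IsStablePartition G P'} {j : ↥P → S} {j' : ↥P' → S} {hj : Injective j}
    {hj' : Injective j'} (h : mkCol G P hP j hj = mkCol G P' hP' j' hj') : P = P' := by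
  rw [← part_mkCol G P hP j hj, h, part_mkCol]

lemma mkCol_inj_j {S : Type} {P P' : Set (Set V)} {hP : IsStablePartition G P}
    {hP' : IsStablePartition G P'} {j : ↥P → S} {j' : ↥P' → S} {hj : Injective j}
    {hj' : Injective j'} (h : mkCol G P hP j hj = mkCol G P' hP' j' hj')
    (b : Set V) (h1 : b ∈ P) (h2 : b ∈ P') : j ⟨b, h1⟩ = j' ⟨b, h2⟩ := by
  obtain ⟨v, hv⟩ := Setoid.nonempty_of_mem_partition hP.1 h1
  rw [← mkCol_apply_mem G P hP j hj h1 hv, h, mkCol_apply_mem G P' hP' j' hj' h2 hv]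

end

end Stmt8Aux

namespace Stmt8Aux

noncomputable section

open Function

variable {V : Type} (G : SimpleGraph V)

abbrev StK (κ : Cardinal.{0}) : Type :=
  {P : Set (Set V) // IsStablePartition G P ∧ Cardinal.mk P = κ}

def eqvOut {κ : Cardinal.{0}} (P : StK G κ) : Quotient.out κ ≃ ↥P.1 :=
  (Equiv.cast (congrArg Quotient.out P.2.2)).symm.trans Cardinal.outMkEquiv

def psiCore (w : ∀ κ : Cardinal.{0}, stWreath G κ) {S : Type} (κ : Cardinal.{0})
    (P : Set (Set V)) (hP : IsStablePartition G P) (hκ : Cardinal.mk P = κ)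
    (j : ↥P → S) (hj : Injective j) : RegColoring G S :=
  mkCol G ((w κ).right ⟨P, hP, hκ⟩).1 ((w κ).right ⟨P, hP, hκ⟩).2.1
    (j ∘ (eqvOut G ⟨P, hP, hκ⟩) ∘ ⇑(((w κ).left ((w κ).right ⟨P, hP, hκ⟩))⁻¹) ∘
      (eqvOut G ((w κ).right ⟨P, hP, hκ⟩)).symm)
    (hj.comp ((Equiv.injective _).comp ((Equiv.injective _).comp (Equiv.injective _))))

def psi (w : ∀ κ : Cardinal.{0}, stWreath G κ) (S : Type) (c : RegColoring G S) :
    RegColoring G S :=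
  psiCore G w (Cardinal.mk (part G c)) (part G c) (part_isStable G c) rfl
    (colorOf G c) (colorOf_inj G c)

lemma psiCore_congr (w : ∀ κ : Cardinal.{0}, stWreath G κ) {S : Type}
    {κ κ' : Cardinal.{0}} {P P' : Set (Set V)} {hP : IsStablePartition G P}
    {hP' : IsStablePartition G P'} {hκ : Cardinal.mk P = κ} {hκ' : Cardinal.mk P' = κ'}
    {j : ↥P → S} {j' : ↥P' → S} {hj : Injective j} {hj' : Injective j'}
    (h : P = P') (hjj : ∀ b (h1 : b ∈ P) (h2 : b ∈ P'), j ⟨b, h1⟩ = j' ⟨b, h2⟩) :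
    psiCore G w κ P hP hκ j hj = psiCore G w κ' P' hP' hκ' j' hj' := by
  subst h
  obtain rfl : j = j' := funext fun b => hjj b.1 b.2 b.2
  subst hκ
  subst hκ'
  rfl

lemma psi_mk (w : ∀ κ : Cardinal.{0}, stWreath G κ) {S : Type} (P : Set (Set V))
    (hP : IsStablePartition G P) (j : ↥P → S) (hj : Injective j) (κ : Cardinal.{0})
    (hκ : Cardinal.mk P = κ) :
    psi G w S (mkCol G P hP j hj) = psiCore G w κ P hP hκ j hj := by
  unfold psi
  exact psiCore_congr G w (part_mkCol G P hP j hj) (colorOf_mkCol G P hP j hj)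

lemma push_psiCore {S T : Type} (ι : S → T) (hι : Injective ι)
    (w : ∀ κ : Cardinal.{0}, stWreath G κ) (κ : Cardinal.{0}) (P : Set (Set V))
    (hP : IsStablePartition G P) (hκ : Cardinal.mk P = κ) (j : ↥P → S) (hj : Injective j) :
    pushColoring G ι hι (psiCore G w κ P hP hκ j hj)
      = psiCore G w κ P hP hκ (ι ∘ j) (hι.comp hj) := rfl

end

end Stmt8Aux

namespace Stmt8Aux

noncomputable section

open Function

variable {V : Type} (G : SimpleGraph V)

lemma psi_one (S : Type) (c : RegColoring G S) : psi G 1 S c = c := by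
  refine Eq.trans ?_ (mkCol_part G c)
  apply mkCol_congr G rfl
  intro b h1 h2
  simp only [Pi.one_apply, SemidirectProduct.one_left, SemidirectProduct.one_right,
    inv_one, Equiv.Perm.coe_one, comp_apply, id_eq, Equiv.apply_symm_apply,
    Equiv.Perm.one_apply]
  exact congrArg (colorOf G c) (Equiv.apply_symm_apply _ _)
  exact (colorOf_inj G c).comp ((Equiv.injective _).comp ((Equiv.injective _).comp
    (Equiv.injective _)))

lemma comp_embed {κ : Cardinal.{0}}
    (Qy Qxy : StK G κ) (A B By : Equiv.Perm (Quotient.out κ)) (hB : B = By)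
    (z : ↥Qxy.1) :
    ⇑((A * B)⁻¹) ((eqvOut G Qxy).symm z)
      = ⇑(By⁻¹) ((eqvOut G Qy).symm ((eqvOut G Qy)
          (⇑(A⁻¹) ((eqvOut G Qxy).symm z)))) := by
  subst hB
  rw [mul_inv_rev, Equiv.Perm.mul_apply, Equiv.symm_apply_apply]

lemma psi_mul (x y : ∀ κ : Cardinal.{0}, stWreath G κ) (S : Type) (c : RegColoring G S) :
    psi G (x * y) S c = psi G x S (psi G y S c) := by
  have hy : psi G y S c = mkCol G
      ((y (Cardinal.mk (part G c))).right ⟨part G c, part_isStable G c, rfl⟩).1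
      ((y (Cardinal.mk (part G c))).right ⟨part G c, part_isStable G c, rfl⟩).2.1
      (colorOf G c ∘ (eqvOut G ⟨part G c, part_isStable G c, rfl⟩) ∘
        ⇑(((y (Cardinal.mk (part G c))).left
            ((y (Cardinal.mk (part G c))).right ⟨part G c, part_isStable G c, rfl⟩))⁻¹) ∘
        (eqvOut G ((y (Cardinal.mk (part G c))).right
          ⟨part G c, part_isStable G c, rfl⟩)).symm)
      ((colorOf_inj G c).comp ((Equiv.injective _).comp ((Equiv.injective _).comp
        (Equiv.injective _)))) := rfl
  rw [hy, psi_mk G x _ _ _ _ (Cardinal.mk (part G c))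
    (((y (Cardinal.mk (part G c))).right ⟨part G c, part_isStable G c, rfl⟩).2.2)]
  apply mkCol_congr G rfl
  · intro b h1 h2
    exact congrArg (fun t => colorOf G c
        ((eqvOut G ⟨part G c, part_isStable G c, rfl⟩) t))
      (comp_embed G _ _ _ _ _
        (congrArg ((y (Cardinal.mk (part G c))).left)
          (Equiv.symm_apply_apply ((x (Cardinal.mk (part G c))).right)
            ((y (Cardinal.mk (part G c))).right ⟨part G c, part_isStable G c, rfl⟩)))
        _)
  · exact (colorOf_inj G c).comp ((Equiv.injective _).comp ((Equiv.injective _).comp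
      (Equiv.injective _)))

lemma psi_nat {S T : Type} (ι : S → T) (hι : Injective ι)
    (w : ∀ κ : Cardinal.{0}, stWreath G κ) (c : RegColoring G S) :
    psi G w T (pushColoring G ι hι c) = pushColoring G ι hι (psi G w S c) := by
  have hc : pushColoring G ι hι c = mkCol G (part G c) (part_isStable G c)
      (ι ∘ colorOf G c) (hι.comp (colorOf_inj G c)) := by
    conv_lhs => rw [← mkCol_part G c]
    rfl
  rw [hc, psi_mk G w _ _ _ _ (Cardinal.mk (part G c)) rfl]
  exact (push_psiCore G ι hι w (Cardinal.mk (part G c)) (part G c) (part_isStable G c) rfl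
    (colorOf G c) (colorOf_inj G c)).symm

end

end Stmt8Aux

namespace Stmt8Aux

noncomputable section

open Function

variable {V : Type} (G : SimpleGraph V)

def Psi (w : ∀ κ : Cardinal.{0}, stWreath G κ) : ChromNatAut G :=
  ⟨psi G w,
   ⟨fun S => Function.bijective_iff_has_inverse.mpr
      ⟨psi G w⁻¹ S,
       fun c => by rw [← psi_mul, inv_mul_cancel, psi_one],
       fun c => by rw [← psi_mul, mul_inv_cancel, psi_one]⟩,
    fun S T ι hι c => psi_nat G ι hι w c⟩⟩

lemma Psi_hom (x y : ∀ κ : Cardinal.{0}, stWreath G κ) :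
    chromComp (Psi G x) (Psi G y) = Psi G (x * y) :=
  Subtype.ext (funext fun S => funext fun c => (psi_mul G x y S c).symm)

lemma perm_extract {κ : Cardinal.{0}} (Pk : StK G κ) (Q Q' : StK G κ) (hQ : Q = Q')
    (π π' : Equiv.Perm (Quotient.out κ))
    (hpt : ∀ b (h1 : b ∈ Q.1) (h2 : b ∈ Q'.1),
      eqvOut G Pk (⇑(π⁻¹) ((eqvOut G Q).symm ⟨b, h1⟩))
        = eqvOut G Pk (⇑(π'⁻¹) ((eqvOut G Q').symm ⟨b, h2⟩))) : π = π' := by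
  subst hQ
  have h : ∀ z : Quotient.out κ, π⁻¹ z = π'⁻¹ z := by
    intro z
    have hb := hpt ((eqvOut G Q) z).1 ((eqvOut G Q) z).2 ((eqvOut G Q) z).2
    have hb2 := (eqvOut G Pk).injective hb
    simpa [Equiv.symm_apply_apply] using hb2
  exact inv_injective (Equiv.ext h)

lemma Psi_injective : Function.Injective (Psi G) := by
  intro w w' h
  have hpsi : psi G w = psi G w' := congrArg Subtype.val h
  have hc : ∀ (κ : Cardinal.{0}) (P : StK G κ),
      psiCore G w κ P.1 P.2.1 P.2.2 (id : ↥P.1 → ↥P.1) injective_id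
        = psiCore G w' κ P.1 P.2.1 P.2.2 (id : ↥P.1 → ↥P.1) injective_id := by
    intro κ P
    rw [← psi_mk G w P.1 P.2.1 id injective_id κ P.2.2,
        ← psi_mk G w' P.1 P.2.1 id injective_id κ P.2.2, hpsi]
  have hright : ∀ (κ : Cardinal.{0}) (P : StK G κ), (w κ).right P = (w' κ).right P := by
    intro κ P
    exact Subtype.ext (mkCol_inj_part G (hc κ P))
  funext κ
  refine SemidirectProduct.ext ?_ (Equiv.ext (hright κ))
  funext Q
  have hQw : (w κ).right (((w κ).right).symm Q) = Q := Equiv.apply_symm_apply _ Q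
  have hQw' : (w' κ).right (((w κ).right).symm Q) = Q :=
    (hright κ _).symm.trans hQw
  have hkey : (w κ).left ((w κ).right (((w κ).right).symm Q))
      = (w' κ).left ((w' κ).right (((w κ).right).symm Q)) := by
    refine perm_extract G ⟨(((w κ).right).symm Q).1, (((w κ).right).symm Q).2.1,
      (((w κ).right).symm Q).2.2⟩ _ _ (hQw.trans hQw'.symm) _ _ ?_
    exact mkCol_inj_j G (hc κ (((w κ).right).symm Q))
  rw [hQw] at hkey
  rw [hQw'] at hkey
  exact hkey

end

end Stmt8Aux

namespace Stmt8Aux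

noncomputable section

open Function

variable {V : Type} (G : SimpleGraph V)

section Surj

variable (t t' : ∀ S : Type, RegColoring G S → RegColoring G S)

/-- The standard coloring of a stable partition `P`, with color set `↥P`. -/
def stdCol (P : Set (Set V)) (hP : IsStablePartition G P) : RegColoring G ↥P :=
  mkCol G P hP id injective_id

def Dc (P : Set (Set V)) (hP : IsStablePartition G P) : RegColoring G ↥P :=
  t ↥P (stdCol G P hP)

def QQ (P : Set (Set V)) (hP : IsStablePartition G P) : Set (Set V) :=
  part G (Dc G t P hP)

lemma QQ_isStable (P : Set (Set V)) (hP : IsStablePartition G P) :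
    IsStablePartition G (QQ G t P hP) := part_isStable G _

def uu (P : Set (Set V)) (hP : IsStablePartition G P) : ↥(QQ G t P hP) → ↥P :=
  colorOf G (Dc G t P hP)

lemma uu_inj (P : Set (Set V)) (hP : IsStablePartition G P) : Injective (uu G t P hP) :=
  colorOf_inj G _

variable (ht : ∀ (S T : Type) (ι : S → T) (hι : Injective ι) (c : RegColoring G S),
    t T (pushColoring G ι hι c) = pushColoring G ι hι (t S c))
variable (ht' : ∀ (S T : Type) (ι : S → T) (hι : Injective ι) (c : RegColoring G S),
    t' T (pushColoring G ι hι c) = pushColoring G ι hι (t' S c))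

include ht in
lemma determine (P : Set (Set V)) (hP : IsStablePartition G P) {S : Type}
    (j : ↥P → S) (hj : Injective j) :
    t S (mkCol G P hP j hj) = mkCol G (QQ G t P hP) (QQ_isStable G t P hP)
      (j ∘ uu G t P hP) (hj.comp (uu_inj G t P hP)) := by
  have h1 : mkCol G P hP j hj = pushColoring G j hj (stdCol G P hP) := rfl
  rw [h1, ht ↥P S j hj (stdCol G P hP)]
  conv_lhs => rw [← mkCol_part G (t ↥P (stdCol G P hP))]
  rfl

variable (htt' : ∀ (S : Type) (c : RegColoring G S), t S (t' S c) = c)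

include ht ht' htt' in
lemma comp_extract (P : Set (Set V)) (hP : IsStablePartition G P) :
    QQ G t (QQ G t' P hP) (QQ_isStable G t' P hP) = P ∧
    ∀ b (h1 : b ∈ QQ G t (QQ G t' P hP) (QQ_isStable G t' P hP)) (h2 : b ∈ P),
      uu G t' P hP (uu G t (QQ G t' P hP) (QQ_isStable G t' P hP) ⟨b, h1⟩) = ⟨b, h2⟩ := by
  have e1 : t' ↥P (stdCol G P hP) = mkCol G (QQ G t' P hP) (QQ_isStable G t' P hP)
      (id ∘ uu G t' P hP) (injective_id.comp (uu_inj G t' P hP)) :=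
    determine G t' ht' P hP id injective_id
  have e2 := determine G t ht (QQ G t' P hP) (QQ_isStable G t' P hP)
    (id ∘ uu G t' P hP) (injective_id.comp (uu_inj G t' P hP))
  have e3 : t ↥P (t' ↥P (stdCol G P hP)) = stdCol G P hP := htt' ↥P (stdCol G P hP)
  rw [e1, e2] at e3
  exact ⟨mkCol_inj_part G e3, fun b h1 h2 => mkCol_inj_j G e3 b h1 h2⟩

variable (ht't : ∀ (S : Type) (c : RegColoring G S), t' S (t S c) = c)

include ht ht' ht't in
lemma uu_surj (P : Set (Set V)) (hP : IsStablePartition G P) :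
    Surjective (uu G t P hP) := by
  intro x
  have hx1 : x.1 ∈ QQ G t' (QQ G t P hP) (QQ_isStable G t P hP) := by
    rw [(comp_extract G t' t ht' ht ht't P hP).1]; exact x.2
  refine ⟨uu G t' (QQ G t P hP) (QQ_isStable G t P hP) ⟨x.1, hx1⟩, ?_⟩
  exact (comp_extract G t' t ht' ht ht't P hP).2 x.1 hx1 x.2

def uEq (P : Set (Set V)) (hP : IsStablePartition G P) : ↥(QQ G t P hP) ≃ ↥P :=
  Equiv.ofBijective (uu G t P hP) ⟨uu_inj G t P hP, uu_surj G t t' ht ht' ht't P hP⟩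

def sigE (κ : Cardinal.{0}) : Equiv.Perm (StK G κ) where
  toFun P := ⟨QQ G t P.1 P.2.1, QQ_isStable G t P.1 P.2.1,
    (Cardinal.mk_congr (uEq G t t' ht ht' ht't P.1 P.2.1)).trans P.2.2⟩
  invFun P := ⟨QQ G t' P.1 P.2.1, QQ_isStable G t' P.1 P.2.1,
    (Cardinal.mk_congr (uEq G t' t ht' ht htt' P.1 P.2.1)).trans P.2.2⟩
  left_inv P := Subtype.ext ((comp_extract G t' t ht' ht ht't P.1 P.2.1).1)
  right_inv P := Subtype.ext ((comp_extract G t t' ht ht' htt' P.1 P.2.1).1)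

include ht ht' htt' ht't in
lemma nmap_exists (κ : Cardinal.{0}) (Q : StK G κ) :
    ∃ π : Equiv.Perm (Quotient.out κ),
      ∀ (P : StK G κ) (_ : sigE G t t' ht ht' htt' ht't κ P = Q)
        (b : ↥(QQ G t P.1 P.2.1)),
        eqvOut G P (⇑(π⁻¹) ((eqvOut G (sigE G t t' ht ht' htt' ht't κ P)).symm b))
          = (uu G t P.1 P.2.1 b : ↥P.1) := by
  set σ := sigE G t t' ht ht' htt' ht't κ with hσ
  set P₀ := σ.symm Q with hP₀def
  refine ⟨((eqvOut G (σ P₀)).trans ((uEq G t t' ht ht' ht't P₀.1 P₀.2.1).trans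
    (eqvOut G P₀).symm))⁻¹, ?_⟩
  intro P hPQ b
  have hP0 : P = P₀ := by rw [hP₀def, ← hPQ, Equiv.symm_apply_apply]
  subst hP0
  rw [inv_inv]
  refine ((Equiv.apply_symm_apply (eqvOut G P₀) _).trans (congrArg (uEq G t t' ht ht' ht't P₀.1 P₀.2.1) (Equiv.apply_symm_apply (eqvOut G (σ P₀)) b))).trans ?_
  rfl

def nmapE (κ : Cardinal.{0}) (Q : StK G κ) : Equiv.Perm (Quotient.out κ) :=
  (nmap_exists G t t' ht ht' htt' ht't κ Q).choose

lemma nmapE_spec (κ : Cardinal.{0}) (Q : StK G κ) :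
    ∀ (P : StK G κ) (_ : sigE G t t' ht ht' htt' ht't κ P = Q)
      (b : ↥(QQ G t P.1 P.2.1)),
      eqvOut G P (⇑((nmapE G t t' ht ht' htt' ht't κ Q)⁻¹)
          ((eqvOut G (sigE G t t' ht ht' htt' ht't κ P)).symm b))
        = (uu G t P.1 P.2.1 b : ↥P.1) :=
  (nmap_exists G t t' ht ht' htt' ht't κ Q).choose_spec

def wE : ∀ κ : Cardinal.{0}, stWreath G κ := fun κ =>
  ⟨nmapE G t t' ht ht' htt' ht't κ, sigE G t t' ht ht' htt' ht't κ⟩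

include ht ht' htt' ht't in
lemma psi_wE (S : Type) (c : RegColoring G S) :
    psi G (wE G t t' ht ht' htt' ht't) S c = t S c := by
  conv_rhs => rw [← mkCol_part G c]
  rw [determine G t ht (part G c) (part_isStable G c) (colorOf G c) (colorOf_inj G c)]
  apply mkCol_congr G rfl
  · intro b h1 h2
    exact congrArg (colorOf G c)
      (nmapE_spec G t t' ht ht' htt' ht't (Cardinal.mk (part G c))
        (sigE G t t' ht ht' htt' ht't (Cardinal.mk (part G c))
          ⟨part G c, part_isStable G c, rfl⟩)
        ⟨part G c, part_isStable G c, rfl⟩ rfl ⟨b, h1⟩)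
  · exact (colorOf_inj G c).comp ((Equiv.injective _).comp ((Equiv.injective _).comp
      (Equiv.injective _)))

end Surj

lemma Psi_surjective : Function.Surjective (Psi G) := by
  intro f
  have hgf : ∀ (S : Type) (c : RegColoring G S),
      (fun S => ⇑(Equiv.ofBijective (f.1 S) (f.2.1 S)).symm) S (f.1 S c) = c :=
    fun S c => Equiv.symm_apply_apply (Equiv.ofBijective (f.1 S) (f.2.1 S)) c
  have hfg : ∀ (S : Type) (c : RegColoring G S),
      f.1 S ((fun S => ⇑(Equiv.ofBijective (f.1 S) (f.2.1 S)).symm) S c) = c :=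
    fun S c => Equiv.apply_symm_apply (Equiv.ofBijective (f.1 S) (f.2.1 S)) c
  have gnat : ∀ (S T : Type) (ι : S → T) (hι : Injective ι) (c : RegColoring G S),
      (fun S => ⇑(Equiv.ofBijective (f.1 S) (f.2.1 S)).symm) T (pushColoring G ι hι c)
        = pushColoring G ι hι
          ((fun S => ⇑(Equiv.ofBijective (f.1 S) (f.2.1 S)).symm) S c) := by
    intro S T ι hι c
    apply (f.2.1 T).1
    rw [hfg T, f.2.2 S T ι hι _, hfg S]
  refine ⟨wE G f.1 (fun S => ⇑(Equiv.ofBijective (f.1 S) (f.2.1 S)).symm)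
    f.2.2 gnat hfg hgf, ?_⟩
  exact Subtype.ext (funext fun S => funext fun c =>
    psi_wE G f.1 (fun S => ⇑(Equiv.ofBijective (f.1 S) (f.2.1 S)).symm)
      f.2.2 gnat hfg hgf S c)

end

end Stmt8Aux

open Stmt8Aux in
/-- The group `Aut(χ(G,•))` of natural automorphisms of the chromatic functor of a
(possibly infinite) simple graph `G` is isomorphic to the direct product, over all cardinal
numbers `κ`, of the wreath products `𝔖_κ ≀ 𝔖_{n_κ}` with `n_κ = #St_κ(G)`. -/
theorem stmt8 {V : Type} (G : SimpleGraph V) :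
    ∃ e : ChromNatAut G ≃ (∀ κ : Cardinal.{0}, stWreath G κ),
      ∀ a b : ChromNatAut G, e (chromComp a b) = e a * e b := by
  have hbij : Function.Bijective (Psi G) := ⟨Psi_injective G, Psi_surjective G⟩
  refine ⟨(Equiv.ofBijective _ hbij).symm, ?_⟩
  intro a b
  rw [Equiv.symm_apply_eq]
  calc chromComp a b
      = chromComp ((Equiv.ofBijective _ hbij) ((Equiv.ofBijective _ hbij).symm a))
          ((Equiv.ofBijective _ hbij) ((Equiv.ofBijective _ hbij).symm b)) := by
        rw [Equiv.apply_symm_apply, Equiv.apply_symm_apply]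
    _ = Psi G ((Equiv.ofBijective _ hbij).symm a * (Equiv.ofBijective _ hbij).symm b) :=
        Psi_hom G _ _
    _ = (Equiv.ofBijective _ hbij)
          ((Equiv.ofBijective _ hbij).symm a * (Equiv.ofBijective _ hbij).symm b) := rfl
end

section
/- Let G = (V,E) be a (possibly infinite) simple graph. The map Φ_G : Aut(G) → Aut(χ(G,•)), which sends a graph automorphism φ to the natural automorphism φ̄ whose component at a set S sends a regular S-coloring c to c ∘ φ⁻¹, is an injective group homomorphism. -/
/-- The map `Φ_G : Aut(G) → Aut(χ(G,•))` sending a graph automorphism `φ` to the natural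
automorphism whose component at a set `S` sends a regular `S`-coloring `c` to `c ∘ φ⁻¹`
is an injective group homomorphism. -/
theorem stmt9 {V : Type} (G : SimpleGraph V) :
    ∃ Φ : (G ≃g G) → ChromNatAut G,
      (∀ (φ : G ≃g G) (S : Type) (c : RegColoring G S),
        ((Φ φ).1 S c).1 = c.1 ∘ ⇑φ.symm) ∧
      (∀ φ ψ : G ≃g G, Φ (φ * ψ) = chromComp (Φ φ) (Φ ψ)) ∧
      Function.Injective Φ := by
  refine ⟨fun φ => ⟨fun S c => ⟨c.1 ∘ ⇑φ.symm, fun v u h hh =>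
      c.2 _ _ (φ.symm.map_adj_iff.mpr h) hh⟩, ?_, ?_⟩, ?_, ?_, ?_⟩
  · intro S
    constructor
    · intro c d h
      apply Subtype.ext
      have h1 := congrArg Subtype.val h
      funext v
      have := congrFun h1 (φ v)
      simpa using this
    · intro c
      exact ⟨⟨c.1 ∘ ⇑φ, fun v u h hh => c.2 _ _ (φ.map_adj_iff.mpr h) hh⟩,
        by apply Subtype.ext; funext v; simp⟩
  · intro S T ι hι c
    rfl
  · intro φ S c
    rfl
  · intro φ ψ
    apply Subtype.ext
    funext S c
    apply Subtype.ext
    rfl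
  · intro φ ψ h
    have h1 := congrArg (fun x : ChromNatAut G =>
      (x.1 V ⟨id, fun v u hvu => hvu.ne⟩).1) h
    ext v
    have := congrFun h1 (ψ v)
    simp only [Function.comp, id] at this
    have : φ.symm (ψ v) = v := by simpa using this
    calc φ v = φ (φ.symm (ψ v)) := by rw [this]
    _ = ψ v := φ.apply_symm_apply _
end

section
/- Let G = (V,E) be a (possibly infinite) simple graph. The injective group homomorphism Φ_G : Aut(G) → Aut(χ(G,•)), φ ↦ (c ↦ c∘φ⁻¹), is a group isomorphism if and only if G is a complete graph or G is the graph with exactly 2 vertices and no edges. -/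
/-- The identity coloring. -/
def cId {V : Type} (G : SimpleGraph V) : RegColoring G V :=
  ⟨id, fun a b h hh => G.ne_of_adj h hh⟩

/-- The predicate: `c` identifies `v` and `u` and is otherwise injective. -/
def PP {V : Type} (G : SimpleGraph V) (v u : V) {S : Type} (c : RegColoring G S) : Prop :=
  c.1 v = c.1 u ∧ ∀ x y : V, x ≠ u → y ≠ u → c.1 x = c.1 y → x = y

theorem PP_comp {V S T : Type} (G : SimpleGraph V) (v u : V) {ι : S → T}
    (hι : Function.Injective ι) (c : RegColoring G S) (d : RegColoring G T)
    (hd : d.1 = ι ∘ c.1) : PP G v u d ↔ PP G v u c := by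
  simp only [PP, hd, Function.comp_apply]
  constructor
  · rintro ⟨h1, h2⟩
    exact ⟨hι h1, fun x y hx hy hxy => h2 x y hx hy (congrArg ι hxy)⟩
  · rintro ⟨h1, h2⟩
    exact ⟨congrArg ι h1, fun x y hx hy hxy => h2 x y hx hy (hι hxy)⟩

open Classical in
/-- The swap natural automorphism (component map). -/
noncomputable def swapF {V : Type} (G : SimpleGraph V) (v u w : V)
    (S : Type) (c : RegColoring G S) : RegColoring G S :=
  if PP G v u c then
    ⟨Equiv.swap (c.1 v) (c.1 w) ∘ c.1,
      fun x y h hh => c.2 x y h ((Equiv.swap (c.1 v) (c.1 w)).injective hh)⟩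
  else c

open Classical in
theorem swapF_val {V S : Type} (G : SimpleGraph V) (v u w : V) (c : RegColoring G S)
    (h : PP G v u c) :
    (swapF G v u w S c).1 = Equiv.swap (c.1 v) (c.1 w) ∘ c.1 := by
  classical
  rw [swapF, if_pos h]

open Classical in
theorem swapF_val' {V S : Type} (G : SimpleGraph V) (v u w : V) (c : RegColoring G S)
    (h : ¬ PP G v u c) : swapF G v u w S c = c := by
  classical
  rw [swapF, if_neg h]

open Classical in
theorem swapF_invol {V : Type} (G : SimpleGraph V) (v u w : V) (S : Type) :
    Function.Involutive (swapF G v u w S) := by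
  classical
  intro c
  by_cases h : PP G v u c
  · have h2 : PP G v u (swapF G v u w S c) :=
      (PP_comp G v u (Equiv.swap (c.1 v) (c.1 w)).injective c _
        (swapF_val G v u w c h)).mpr h
    apply Subtype.ext
    have hv : (swapF G v u w S c).1 v = c.1 w := by
      rw [swapF_val G v u w c h]; exact Equiv.swap_apply_left _ _
    have hw : (swapF G v u w S c).1 w = c.1 v := by
      rw [swapF_val G v u w c h]; exact Equiv.swap_apply_right _ _
    rw [swapF_val G v u w _ h2, hv, hw, swapF_val G v u w c h]
    funext x
    show Equiv.swap (c.1 w) (c.1 v) (Equiv.swap (c.1 v) (c.1 w) (c.1 x)) = c.1 x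
    rw [Equiv.swap_comm (c.1 w) (c.1 v), Equiv.swap_apply_self]
  · rw [swapF_val' G v u w c h, swapF_val' G v u w c h]

open Classical in
theorem swapF_nat {V : Type} (G : SimpleGraph V) (v u w : V) (S T : Type)
    (ι : S → T) (hι : Function.Injective ι) (c : RegColoring G S) :
    swapF G v u w T (pushColoring G ι hι c) = pushColoring G ι hι (swapF G v u w S c) := by
  classical
  by_cases h : PP G v u c
  · have h' : PP G v u (pushColoring G ι hι c) := (PP_comp G v u hι c _ rfl).mpr h
    apply Subtype.ext
    rw [swapF_val G v u w _ h']
    show Equiv.swap ((ι ∘ c.1) v) ((ι ∘ c.1) w) ∘ (ι ∘ c.1) = ι ∘ (swapF G v u w S c).1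
    rw [swapF_val G v u w c h]
    funext x
    exact hι.swap_apply (c.1 v) (c.1 w) (c.1 x)
  · have h' : ¬ PP G v u (pushColoring G ι hι c) := fun hh =>
      h ((PP_comp G v u hι c _ rfl).mp hh)
    rw [swapF_val' G v u w _ h', swapF_val' G v u w c h]

/-- The swap natural automorphism. -/
noncomputable def swapNA {V : Type} (G : SimpleGraph V) (v u w : V) : ChromNatAut G :=
  ⟨swapF G v u w, fun S => (swapF_invol G v u w S).bijective, swapF_nat G v u w⟩

open Classical in
/-- The coloring merging `u` into `v`. -/
noncomputable def mergeCol {V : Type} (G : SimpleGraph V) (v u : V) (hna : ¬ G.Adj v u) :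
    RegColoring G V :=
  ⟨fun x => if x = u then v else x, by
    intro x y h hh
    by_cases hx : x = u
    · by_cases hy : y = u
      · exact G.ne_of_adj h (hx.trans hy.symm)
      · simp only [hx, hy, if_true, if_false, ite_true, ite_false, reduceIte] at hh
        rw [hx, ← hh] at h
        exact hna h.symm
    · by_cases hy : y = u
      · simp only [hx, hy, if_true, if_false, ite_true, ite_false, reduceIte] at hh
        rw [hy, hh] at h
        exact hna h
      · simp only [hx, hy, if_false, ite_false, reduceIte] at hh
        exact G.ne_of_adj h hh⟩

/-- The Yoneda-type lemma: on injective colorings, `F` acts by precomposition with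
`F` evaluated at the identity coloring. -/
theorem yoneda_key {V : Type} (G : SimpleGraph V) (F : ChromNatAut G)
    {S : Type} (c : RegColoring G S) (hc : Function.Injective c.1) :
    (F.1 S c).1 = c.1 ∘ (F.1 V (cId G)).1 := by
  have hpush : pushColoring G c.1 hc (cId G) = c := Subtype.ext rfl
  have h := F.2.2 V S c.1 hc (cId G)
  rw [hpush] at h
  rw [h]
  rfl

/-- For a (possibly infinite) simple graph `G`, the injective group homomorphism
`Φ_G : Aut(G) → Aut(χ(G,•))`, `φ ↦ (c ↦ c ∘ φ⁻¹)`, is a group isomorphism (i.e. is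
bijective) if and only if `G` is a complete graph or `G` is the graph with exactly `2`
vertices and no edges. -/
theorem stmt10 {V : Type} (G : SimpleGraph V) (Φ : (G ≃g G) → ChromNatAut G)
    (hΦ : ∀ (φ : G ≃g G) (S : Type) (c : RegColoring G S),
      ((Φ φ).1 S c).1 = c.1 ∘ ⇑φ.symm) :
    Function.Bijective Φ ↔
      ((∀ v u : V, v ≠ u → G.Adj v u) ∨
        (Nat.card V = 2 ∧ ∀ v u : V, ¬ G.Adj v u)) := by
  classical
  have hinj : Function.Injective Φ := by
    intro φ ψ h
    have h1 := hΦ φ V (cId G)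
    have h2 := hΦ ψ V (cId G)
    rw [h] at h1
    rw [h1] at h2
    -- h2 : (cId G).1 ∘ ⇑φ.symm = (cId G).1 ∘ ⇑ψ.symm
    have hss : φ.symm = ψ.symm := by
      ext x
      exact congrFun h2 x
    exact congrArg RelIso.symm hss
  constructor
  · intro hbij
    by_contra hcon
    obtain ⟨hnc, hn2⟩ := not_or.mp hcon
    push_neg at hnc
    obtain ⟨v, u, hvu, hna⟩ := hnc
    by_cases hw : ∃ w, w ≠ v ∧ w ≠ u
    · obtain ⟨w, hwv, hwu⟩ := hw
      obtain ⟨φ, hφF⟩ := hbij.2 (swapNA G v u w)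
      have h1 := hΦ φ V (cId G)
      rw [hφF] at h1
      have hnP : ¬ PP G v u (cId G) := fun h => hvu h.1
      have hA : (swapNA G v u w).1 V (cId G) = cId G := swapF_val' G v u w (cId G) hnP
      rw [hA] at h1
      have hsymm : ∀ x, φ.symm x = x := fun x => (congrFun h1 x).symm
      have hP : PP G v u (mergeCol G v u hna) := by
        constructor
        · simp [mergeCol]
        · intro x y hx hy hxy
          simpa [mergeCol, hx, hy] using hxy
      have h2 := hΦ φ V (mergeCol G v u hna)
      rw [hφF] at h2
      have hB := swapF_val G v u w (mergeCol G v u hna) hP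
      have h3 := congrFun (hB.symm.trans h2) w
      rw [Function.comp_apply, Function.comp_apply, hsymm w] at h3
      have hc0v : (mergeCol G v u hna).1 v = v := by simp [mergeCol]
      have hc0w : (mergeCol G v u hna).1 w = w := by simp [mergeCol, hwu]
      rw [hc0v, hc0w, Equiv.swap_apply_right] at h3
      exact hwv h3.symm
    · push_neg at hw
      have hall : ∀ x : V, x = v ∨ x = u := fun x => or_iff_not_imp_left.mpr (hw x)
      refine hn2 ⟨?_, ?_⟩
      · exact Nat.card_eq_two_iff.mpr ⟨v, u, hvu,
          Set.eq_univ_of_forall (fun x => by rcases hall x with h|h <;> simp [h])⟩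
      · intro x y hadj
        rcases hall x with hx|hx <;> rcases hall y with hy|hy <;> subst hx <;> subst hy
        · exact G.ne_of_adj hadj rfl
        · exact hna hadj
        · exact hna hadj.symm
        · exact G.ne_of_adj hadj rfl
  · rintro (hcomp | ⟨hcard, hempty⟩)
    · -- complete graph case
      refine ⟨hinj, ?_⟩
      intro F
      have hcinj : ∀ {S : Type} (c : RegColoring G S), Function.Injective c.1 := by
        intro S c x y hxy
        by_contra hne
        exact c.2 x y (hcomp x y hne) hxy
      set e := F.1 V (cId G) with he
      have key : ∀ (S : Type) (c : RegColoring G S), (F.1 S c).1 = c.1 ∘ e.1 :=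
        fun S c => yoneda_key G F c (hcinj c)
      obtain ⟨d, hd⟩ := (F.2.1 V).2 (cId G)
      have hd1 : d.1 ∘ e.1 = id := by
        rw [← key V d, hd]
        rfl
      have heinj : Function.Injective e.1 := by
        intro x y hxy
        have h1 : d.1 (e.1 x) = x := congrFun hd1 x
        have h2 : d.1 (e.1 y) = y := congrFun hd1 y
        rw [← h1, hxy, h2]
      have hesurj : Function.Surjective e.1 := by
        intro y
        refine ⟨d.1 y, hcinj d ?_⟩
        show d.1 (e.1 (d.1 y)) = d.1 y
        exact congrFun hd1 (d.1 y)
      have hebij : Function.Bijective e.1 := ⟨heinj, hesurj⟩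
      let ψ : V ≃ V := Equiv.ofBijective e.1 hebij
      have hmri : ∀ a b : V, G.Adj (ψ a) (ψ b) ↔ G.Adj a b := by
        intro a b
        constructor
        · intro h
          exact hcomp a b (fun hab => G.ne_of_adj h (congrArg ψ hab))
        · intro h
          exact hcomp (ψ a) (ψ b) (fun hab => G.ne_of_adj h (ψ.injective hab))
      let χiso : G ≃g G := ⟨ψ, hmri _ _⟩
      refine ⟨χiso.symm, Subtype.ext ?_⟩
      funext S c
      apply Subtype.ext
      rw [hΦ χiso.symm S c, key S c]
      rfl
    · -- two vertices, no edges case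
      refine ⟨hinj, ?_⟩
      intro F
      obtain ⟨a, b, hab, huniv⟩ := Nat.card_eq_two_iff.mp hcard
      have hall : ∀ x : V, x = a ∨ x = b := by
        intro x
        have hx : x ∈ ({a, b} : Set V) := huniv ▸ Set.mem_univ x
        simpa using hx
      have hfin : Finite V := Nat.finite_of_card_ne_zero (by rw [hcard]; exact two_ne_zero)
      have hconst : ∀ (S : Type) (c : RegColoring G S), c.1 b = c.1 a → F.1 S c = c := by
        intro S c hcab
        have hcc : ∀ x, c.1 x = c.1 a := by
          intro x
          rcases hall x with h|h <;> subst h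
          · rfl
          · exact hcab
        set cU : RegColoring G Unit := ⟨fun _ => (), fun x y h _ => hempty x y h⟩ with hcU
        have hι : Function.Injective (fun _ : Unit => c.1 a) := fun x y _ => Subsingleton.elim x y
        have hpush : pushColoring G (fun _ : Unit => c.1 a) hι cU = c := by
          apply Subtype.ext
          funext x
          exact (hcc x).symm
        have hFU : F.1 Unit cU = cU := Subsingleton.elim _ _
        have h := F.2.2 Unit S (fun _ : Unit => c.1 a) hι cU
        rw [hFU, hpush] at h
        exact h
      set e := F.1 V (cId G) with he
      have heab : e.1 a ≠ e.1 b := by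
        intro h
        have hec : ∀ x, e.1 x = e.1 a := by
          intro x
          rcases hall x with hx|hx <;> subst hx
          · rfl
          · exact h.symm
        set cc : RegColoring G V := ⟨fun _ => e.1 a, fun x y hadj _ => hempty x y hadj⟩ with hcc
        have h1 : e = cc := Subtype.ext (funext hec)
        have h2 : F.1 V cc = cc := hconst V cc rfl
        have h3 : cId G = cc := (F.2.1 V).1 (by rw [← he, h1, h2])
        have h4 := congrFun (congrArg Subtype.val h3) a
        have h5 := congrFun (congrArg Subtype.val h3) b
        -- h4 : a = e.1 a, h5 : b = e.1 a
        exact hab (h4.trans h5.symm)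
      have heinj : Function.Injective e.1 := by
        intro x y hxy
        rcases hall x with hx|hx <;> rcases hall y with hy|hy <;> subst hx <;> subst hy
        · rfl
        · exact absurd hxy heab
        · exact absurd hxy.symm heab
        · rfl
      have hebij : Function.Bijective e.1 := Finite.injective_iff_bijective.mp heinj
      have key : ∀ (S : Type) (c : RegColoring G S), (F.1 S c).1 = c.1 ∘ e.1 := by
        intro S c
        by_cases hc : c.1 a = c.1 b
        · rw [hconst S c hc.symm]
          have hcc : ∀ z, c.1 z = c.1 a := by
            intro z
            rcases hall z with h|h <;> subst h
            · rfl
            · exact hc.symm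
          funext x
          show c.1 x = c.1 (e.1 x)
          rw [hcc x, hcc (e.1 x)]
        · have hcinj : Function.Injective c.1 := by
            intro x y hxy
            rcases hall x with hx|hx <;> rcases hall y with hy|hy <;> subst hx <;> subst hy
            · rfl
            · exact absurd hxy hc
            · exact absurd hxy.symm hc
            · rfl
          exact yoneda_key G F c hcinj
      let ψ : V ≃ V := Equiv.ofBijective e.1 hebij
      let χiso : G ≃g G := ⟨ψ, iff_of_false (hempty _ _) (hempty _ _)⟩
      refine ⟨χiso.symm, Subtype.ext ?_⟩
      funext S c
      apply Subtype.ext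
      rw [hΦ χiso.symm S c, key S c]
      rfl
end

section
/- Let G = (V,E) be a finite simple graph with n = #V ≥ 3 vertices which is not complete. Then the set St_{n−1}(G) of stable partitions of G with exactly n−1 blocks is nonempty, and the cardinality of Aut(G) is strictly smaller than the cardinality of the group Aut(χ(G,•)) of natural automorphisms of the chromatic functor; in particular Φ_G : Aut(G) → Aut(χ(G,•)) is not surjective. -/
section Aux

variable {V : Type}

/-- the kernel of `c` is the partition merging exactly `u₀, v₀`. -/
def Kc {S : Type} (u₀ v₀ : V) (c : V → S) : Prop :=
  ∀ x y : V, c x = c y ↔ (x = y ∨ (x = u₀ ∧ y = v₀) ∨ (x = v₀ ∧ y = u₀))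

open Classical in
noncomputable def tauF (u₀ v₀ w : V) : V → V :=
  fun x => if x = w then u₀ else if x = u₀ ∨ x = v₀ then w else x

open Classical in
lemma tauF_w {u₀ v₀ w : V} : tauF u₀ v₀ w w = u₀ := by simp [tauF]

lemma Kc_comp_iff {S T : Type} {u₀ v₀ : V} {ι : S → T} (hι : Function.Injective ι)
    (c : V → S) : Kc u₀ v₀ (ι ∘ c) ↔ Kc u₀ v₀ c := by
  unfold Kc
  constructor <;> intro h x y
  · rw [← h x y]
    exact ⟨fun hh => congrArg ι hh, fun hh => hι hh⟩
  · rw [← h x y]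
    exact ⟨fun hh => hι hh, fun hh => congrArg ι hh⟩

lemma Kc_tau {S : Type} {u₀ v₀ w : V} (hne : u₀ ≠ v₀) (hw1 : w ≠ u₀) (hw2 : w ≠ v₀)
    {c : V → S} (hc : Kc u₀ v₀ c) : Kc u₀ v₀ (c ∘ tauF u₀ v₀ w) := by
  have hne' := hne.symm
  have hw1' := hw1.symm
  have hw2' := hw2.symm
  intro x y
  rw [Function.comp_apply, Function.comp_apply, hc (tauF u₀ v₀ w x) (tauF u₀ v₀ w y)]
  unfold tauF
  by_cases h1 : x = w <;> by_cases h2 : x = u₀ <;> by_cases h3 : x = v₀ <;>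
    by_cases h4 : y = w <;> by_cases h5 : y = u₀ <;> by_cases h6 : y = v₀ <;>
      subst_vars <;> simp_all <;> tauto

lemma tau_tau {S : Type} {u₀ v₀ w : V} (hne : u₀ ≠ v₀) (hw1 : w ≠ u₀) (hw2 : w ≠ v₀)
    {c : V → S} (hcc : c u₀ = c v₀) :
    (c ∘ tauF u₀ v₀ w) ∘ tauF u₀ v₀ w = c := by
  have hne' := hne.symm
  have hw1' := hw1.symm
  have hw2' := hw2.symm
  funext x
  simp only [Function.comp_apply]
  unfold tauF
  by_cases h1 : x = w <;> by_cases h2 : x = u₀ <;> by_cases h3 : x = v₀ <;>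
    subst_vars <;> simp_all

end Aux

section Aux2

variable {V : Type}

lemma reg_tau {S : Type} (G : SimpleGraph V) {u₀ v₀ w : V} (hne : u₀ ≠ v₀)
    (hna : ¬ G.Adj u₀ v₀) (hw1 : w ≠ u₀) (hw2 : w ≠ v₀) (c : RegColoring G S)
    (h : Kc u₀ v₀ c.1) :
    ∀ v u : V, G.Adj v u → (c.1 ∘ tauF u₀ v₀ w) v ≠ (c.1 ∘ tauF u₀ v₀ w) u := by
  intro v u hadj hh
  rcases (Kc_tau hne hw1 hw2 h v u).mp hh with h' | ⟨rfl, rfl⟩ | ⟨rfl, rfl⟩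
  · exact G.loopless.irrefl _ (h' ▸ hadj)
  · exact hna hadj
  · exact hna hadj.symm

open Classical in
noncomputable def Ffun (G : SimpleGraph V) (u₀ v₀ w : V) (hne : u₀ ≠ v₀)
    (hna : ¬ G.Adj u₀ v₀) (hw1 : w ≠ u₀) (hw2 : w ≠ v₀) :
    ∀ S : Type, RegColoring G S → RegColoring G S :=
  fun S c =>
    if h : Kc u₀ v₀ c.1 then
      ⟨c.1 ∘ tauF u₀ v₀ w, reg_tau G hne hna hw1 hw2 c h⟩
    else c

lemma Ffun_val_pos {S : Type} {G : SimpleGraph V} {u₀ v₀ w : V} {hne : u₀ ≠ v₀}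
    {hna : ¬ G.Adj u₀ v₀} {hw1 : w ≠ u₀} {hw2 : w ≠ v₀} {c : RegColoring G S}
    (h : Kc u₀ v₀ c.1) :
    (Ffun G u₀ v₀ w hne hna hw1 hw2 S c).1 = c.1 ∘ tauF u₀ v₀ w := by
  unfold Ffun; rw [dif_pos h]

lemma Ffun_neg {S : Type} {G : SimpleGraph V} {u₀ v₀ w : V} {hne : u₀ ≠ v₀}
    {hna : ¬ G.Adj u₀ v₀} {hw1 : w ≠ u₀} {hw2 : w ≠ v₀} {c : RegColoring G S}
    (h : ¬ Kc u₀ v₀ c.1) :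
    Ffun G u₀ v₀ w hne hna hw1 hw2 S c = c := by
  unfold Ffun; rw [dif_neg h]

noncomputable def Fnat (G : SimpleGraph V) (u₀ v₀ w : V) (hne : u₀ ≠ v₀)
    (hna : ¬ G.Adj u₀ v₀) (hw1 : w ≠ u₀) (hw2 : w ≠ v₀) : ChromNatAut G := by
  refine ⟨Ffun G u₀ v₀ w hne hna hw1 hw2, fun S => Function.Involutive.bijective ?_, ?_⟩
  · intro c
    by_cases h : Kc u₀ v₀ c.1
    · have hK2 : Kc u₀ v₀ ((Ffun G u₀ v₀ w hne hna hw1 hw2 S c).1) := by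
        rw [Ffun_val_pos h]; exact Kc_tau hne hw1 hw2 h
      apply Subtype.ext
      rw [Ffun_val_pos hK2, Ffun_val_pos h]
      exact tau_tau hne hw1 hw2 ((h u₀ v₀).mpr (Or.inr (Or.inl ⟨rfl, rfl⟩)))
    · rw [Ffun_neg h, Ffun_neg h]
  · intro S T ι hι c
    by_cases h : Kc u₀ v₀ c.1
    · have h' : Kc u₀ v₀ (pushColoring G ι hι c).1 := (Kc_comp_iff hι c.1).mpr h
      apply Subtype.ext
      calc (Ffun G u₀ v₀ w hne hna hw1 hw2 T (pushColoring G ι hι c)).1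
          = (pushColoring G ι hι c).1 ∘ tauF u₀ v₀ w := Ffun_val_pos h'
        _ = ι ∘ (c.1 ∘ tauF u₀ v₀ w) := rfl
        _ = ι ∘ (Ffun G u₀ v₀ w hne hna hw1 hw2 S c).1 := by rw [Ffun_val_pos h]
        _ = (pushColoring G ι hι (Ffun G u₀ v₀ w hne hna hw1 hw2 S c)).1 := rfl
    · have h' : ¬ Kc u₀ v₀ (pushColoring G ι hι c).1 :=
        fun hh => h ((Kc_comp_iff hι c.1).mp hh)
      rw [Ffun_neg h', Ffun_neg h]

def PhiNat (G : SimpleGraph V) (φ : G ≃g G) : ChromNatAut G := by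
  refine ⟨fun S c => ⟨c.1 ∘ ⇑φ.symm, fun v u h hh => c.2 _ _ (φ.symm.map_adj_iff.mpr h) hh⟩,
    fun S => ⟨?_, ?_⟩, fun S T ι hι c => rfl⟩
  · intro c d h
    apply Subtype.ext
    funext v
    have h1 := congrFun (congrArg Subtype.val h) (φ v)
    simpa [RelIso.symm_apply_apply] using h1
  · intro d
    refine ⟨⟨d.1 ∘ ⇑φ, fun v u h hh => d.2 _ _ (φ.map_adj_iff.mpr h) hh⟩, ?_⟩
    apply Subtype.ext
    funext v
    show d.1 (φ (φ.symm v)) = d.1 v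
    rw [RelIso.apply_symm_apply]

open Classical in
noncomputable def cZero (u₀ v₀ : V) : V → V := fun x => if x = v₀ then u₀ else x

open Classical in
lemma Kc_cZero {u₀ v₀ : V} (hne : u₀ ≠ v₀) : Kc u₀ v₀ (cZero u₀ v₀) := by
  have hne' := hne.symm
  intro x y
  unfold cZero
  by_cases h1 : x = v₀ <;> by_cases h2 : y = v₀ <;> by_cases h3 : x = u₀ <;>
    by_cases h4 : y = u₀ <;> subst_vars <;> simp_all <;> tauto

open Classical in
lemma cZero_u {u₀ v₀ : V} (hne : u₀ ≠ v₀) : cZero u₀ v₀ u₀ = u₀ := by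
  simp [cZero, hne]

open Classical in
lemma cZero_w {u₀ v₀ w : V} (hw2 : w ≠ v₀) : cZero u₀ v₀ w = w := by
  simp [cZero, hw2]

lemma not_Kc_id {u₀ v₀ : V} (hne : u₀ ≠ v₀) : ¬ Kc u₀ v₀ (fun v : V => v) :=
  fun h => hne ((h u₀ v₀).mpr (Or.inr (Or.inl ⟨rfl, rfl⟩)))

lemma cZero_reg {u₀ v₀ : V} (G : SimpleGraph V) (hne : u₀ ≠ v₀) (hna : ¬ G.Adj u₀ v₀) :
    ∀ v u : V, G.Adj v u → cZero u₀ v₀ v ≠ cZero u₀ v₀ u := by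
  intro v u hadj hh
  rcases (Kc_cZero hne v u).mp hh with h' | ⟨rfl, rfl⟩ | ⟨rfl, rfl⟩
  · exact G.loopless.irrefl _ (h' ▸ hadj)
  · exact hna hadj
  · exact hna hadj.symm

def idColoring (G : SimpleGraph V) : RegColoring G V :=
  ⟨fun v => v, fun v u h hh => h.ne hh⟩

noncomputable def cZeroColoring (G : SimpleGraph V) (u₀ v₀ : V) (hne : u₀ ≠ v₀)
    (hna : ¬ G.Adj u₀ v₀) : RegColoring G V :=
  ⟨cZero u₀ v₀, cZero_reg G hne hna⟩

lemma exists_factor {S : Type} [Finite V] (G : SimpleGraph V) (c : RegColoring G S)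
    (n : ℕ) (hn : Nat.card V = n) :
    ∃ (m : ℕ) (_ : m ≤ n) (c' : RegColoring G (Fin m)) (ι : Fin m → S)
      (hι : Function.Injective ι), pushColoring G ι hι c' = c := by
  haveI : Finite ↥(Set.range c.1) := (Set.finite_range c.1).to_subtype
  obtain ⟨m, ⟨e⟩⟩ := Finite.exists_equiv_fin ↥(Set.range c.1)
  have hm : m ≤ n := by
    rw [← hn, ← Nat.card_eq_of_equiv_fin e]
    exact Nat.card_le_card_of_surjective _ Set.rangeFactorization_surjective
  refine ⟨m, hm, ⟨fun v => e ⟨c.1 v, Set.mem_range_self v⟩,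
    fun v u hadj hh => c.2 v u hadj (congrArg Subtype.val (e.injective hh))⟩,
    fun i => ((e.symm i : ↥(Set.range c.1)) : S),
    fun i j hij => e.symm.injective (Subtype.ext hij), ?_⟩
  apply Subtype.ext
  funext v
  show ((e.symm (e ⟨c.1 v, _⟩) : ↥(Set.range c.1)) : S) = c.1 v
  rw [Equiv.symm_apply_apply]

end Aux2


/-- Let `G` be a finite simple graph with `n ≥ 3` vertices which is not complete. Then
`St_{n−1}(G)` is nonempty, `#Aut(G) < #Aut(χ(G,•))`, and `Φ_G : φ ↦ (c ↦ c ∘ φ⁻¹)` is not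
surjective. -/
theorem stmt14 {V : Type} [Fintype V] (G : SimpleGraph V) (n : ℕ)
    (hn : Fintype.card V = n) (h3 : 3 ≤ n)
    (hnc : ¬ ∀ v u : V, v ≠ u → G.Adj v u) :
    {P : Set (Set V) | IsStablePartition G P ∧ P.ncard = n - 1}.Nonempty ∧
    Nat.card (G ≃g G) < Nat.card (ChromNatAut G) ∧
    ∀ Φ : (G ≃g G) → ChromNatAut G,
      (∀ (φ : G ≃g G) (S : Type) (c : RegColoring G S),
        ((Φ φ).1 S c).1 = c.1 ∘ ⇑φ.symm) →
      ¬ Function.Surjective Φ := by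
  classical
  push_neg at hnc
  obtain ⟨u₀, v₀, hne, hna⟩ := hnc
  -- a third vertex
  have hw : ∃ w : V, w ≠ u₀ ∧ w ≠ v₀ := by
    by_contra hcon
    push_neg at hcon
    have hsub : (Finset.univ : Finset V) ⊆ {u₀, v₀} := by
      intro x _
      rcases eq_or_ne x u₀ with rfl | hx
      · exact Finset.mem_insert_self _ _
      · exact Finset.mem_insert_of_mem (Finset.mem_singleton.mpr (hcon x hx))
    have hcard := Finset.card_le_card hsub
    have h2 : ({u₀, v₀} : Finset V).card ≤ 2 :=
      le_trans (Finset.card_insert_le _ _) (by simp)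
    rw [Finset.card_univ, hn] at hcard
    omega
  obtain ⟨w, hw1, hw2⟩ := hw
  -- Part 1 : the stable partition
  have part1 : {P : Set (Set V) | IsStablePartition G P ∧ P.ncard = n - 1}.Nonempty := by
    refine ⟨insert ({u₀, v₀} : Set V) ((fun x => ({x} : Set V)) '' ({u₀, v₀}ᶜ)), ⟨⟨?_, ?_⟩, ?_⟩, ?_⟩
    · -- ∅ ∉ P
      intro h
      rcases Set.mem_insert_iff.mp h with h | ⟨x, _, h⟩
      · exact absurd h.symm (Set.insert_nonempty _ _).ne_empty
      · exact absurd h (by simp)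
    · -- cover uniquely
      intro a
      by_cases ha : a = u₀ ∨ a = v₀
      · refine ⟨{u₀, v₀}, ⟨Set.mem_insert _ _, by rcases ha with rfl | rfl <;> simp⟩, ?_⟩
        rintro b ⟨hb, hab⟩
        rcases Set.mem_insert_iff.mp hb with rfl | ⟨x, hx, rfl⟩
        · rfl
        · rcases ha with rfl | rfl
          · exact absurd (Set.mem_singleton_iff.mp hab ▸ hx) (by simp [Set.mem_singleton_iff.mp hab])
          · exact absurd (Set.mem_singleton_iff.mp hab ▸ hx) (by simp [Set.mem_singleton_iff.mp hab])
      · push_neg at ha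
        refine ⟨{a}, ⟨Set.mem_insert_of_mem _ ⟨a, by simp [ha.1, ha.2], rfl⟩, rfl⟩, ?_⟩
        rintro b ⟨hb, hab⟩
        rcases Set.mem_insert_iff.mp hb with rfl | ⟨x, hx, rfl⟩
        · rcases hab with rfl | hab
          · exact absurd rfl ha.1
          · exact absurd (Set.mem_singleton_iff.mp hab) ha.2
        · rw [Set.mem_singleton_iff.mp hab]
    · -- stability
      intro b hb v hv u hu hadj
      rcases Set.mem_insert_iff.mp hb with rfl | ⟨x, _, rfl⟩
      · rcases hv with rfl | hv <;> rcases hu with rfl | hu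
        · exact G.loopless.irrefl _ hadj
        · rw [Set.mem_singleton_iff.mp hu] at hadj; exact hna hadj
        · rw [Set.mem_singleton_iff.mp hv] at hadj; exact hna hadj.symm
        · rw [Set.mem_singleton_iff.mp hv, Set.mem_singleton_iff.mp hu] at hadj
          exact G.loopless.irrefl _ hadj
      · rw [Set.mem_singleton_iff.mp hv, Set.mem_singleton_iff.mp hu] at hadj
        exact G.loopless.irrefl _ hadj
    · -- cardinality
      have hnotmem : ({u₀, v₀} : Set V) ∉ (fun x => ({x} : Set V)) '' ({u₀, v₀}ᶜ) := by
        rintro ⟨x, _, hx⟩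
        simp only at hx
        have h1 : u₀ ∈ ({x} : Set V) := by rw [hx]; simp
        have h2 : v₀ ∈ ({x} : Set V) := by rw [hx]; simp
        exact hne ((Set.mem_singleton_iff.mp h1).trans (Set.mem_singleton_iff.mp h2).symm)
      rw [Set.ncard_insert_of_notMem hnotmem,
        Set.ncard_image_of_injective _ Set.singleton_injective]
      have hc1 : ({u₀, v₀} : Set V).ncard + ({u₀, v₀}ᶜ : Set V).ncard = Nat.card V :=
        Set.ncard_add_ncard_compl _
      rw [Set.ncard_pair hne, Nat.card_eq_fintype_card, hn] at hc1
      omega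
  -- Part 3 : non-surjectivity of any pointwise-composition map
  have key : ∀ Φ : (G ≃g G) → ChromNatAut G,
      (∀ (φ : G ≃g G) (S : Type) (c : RegColoring G S),
        ((Φ φ).1 S c).1 = c.1 ∘ ⇑φ.symm) → ¬ Function.Surjective Φ := by
    intro Φ hΦ hsurj
    obtain ⟨φ, hφ⟩ := hsurj (Fnat G u₀ v₀ w hne hna hw1 hw2)
    have h1 := hΦ φ V (idColoring G)
    rw [hφ] at h1
    have e1 : (Fnat G u₀ v₀ w hne hna hw1 hw2).1 V (idColoring G) = idColoring G :=
      @Ffun_neg V V G u₀ v₀ w hne hna hw1 hw2 (idColoring G) (not_Kc_id hne)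
    rw [e1] at h1
    have hs : ∀ x : V, φ.symm x = x := fun x => (congrFun h1 x).symm
    have h2 := hΦ φ V (cZeroColoring G u₀ v₀ hne hna)
    rw [hφ] at h2
    have e2 : ((Fnat G u₀ v₀ w hne hna hw1 hw2).1 V (cZeroColoring G u₀ v₀ hne hna)).1
        = cZero u₀ v₀ ∘ tauF u₀ v₀ w :=
      @Ffun_val_pos V V G u₀ v₀ w hne hna hw1 hw2 (cZeroColoring G u₀ v₀ hne hna) (Kc_cZero hne)
    rw [e2] at h2
    have h3' := congrFun h2 w
    simp only [Function.comp_apply] at h3'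
    rw [hs w, tauF_w, cZero_u hne,
      show (cZeroColoring G u₀ v₀ hne hna).1 w = w from cZero_w hw2] at h3'
    exact hw1 h3'.symm
  refine ⟨part1, ?_, key⟩
  -- Part 2 : cardinality inequality
  have hEinj : Function.Injective
      (fun (f : ChromNatAut G) (m : Fin (n + 1)) => f.1 (Fin m.1)) := by
    intro f g h
    apply Subtype.ext
    funext S c
    obtain ⟨m, hm, c', ι, hι, hfac⟩ :=
      exists_factor G c n (Nat.card_eq_fintype_card.trans hn)
    have hfg : f.1 (Fin m) = g.1 (Fin m) := congrFun h ⟨m, Nat.lt_succ_of_le hm⟩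
    calc f.1 S c = f.1 S (pushColoring G ι hι c') := by rw [hfac]
      _ = pushColoring G ι hι (f.1 (Fin m) c') := f.2.2 _ _ ι hι c'
      _ = pushColoring G ι hι (g.1 (Fin m) c') := by rw [hfg]
      _ = g.1 S (pushColoring G ι hι c') := (g.2.2 _ _ ι hι c').symm
      _ = g.1 S c := by rw [hfac]
  haveI hfin : Finite (ChromNatAut G) := Finite.of_injective _ hEinj
  have hPhiInj : Function.Injective (PhiNat G) := by
    intro φ ψ h
    have h1 : ((PhiNat G φ).1 V (idColoring G)).1 = ((PhiNat G ψ).1 V (idColoring G)).1 := by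
      rw [h]
    have hs : ∀ x : V, φ.symm x = ψ.symm x := fun x => congrFun h1 x
    apply DFunLike.ext
    intro x
    apply ψ.symm.injective
    rw [← hs (φ x), RelIso.symm_apply_apply, RelIso.symm_apply_apply]
  have hns := key (PhiNat G) (fun _ _ _ => rfl)
  have hss : Set.range (PhiNat G) ⊂ Set.univ :=
    Set.ssubset_univ_iff.mpr (fun heq => hns (Set.range_eq_univ.mp heq))
  have hlt := Set.ncard_lt_ncard hss Set.finite_univ
  rw [Set.ncard_univ, ← Nat.card_coe_set_eq, Nat.card_range_of_injective hPhiInj] at hlt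
  exact hlt
end

section
/- Fix a positive integer k and a partition λ = (λ₁,…,λ_l) of an integer m with m ≤ k. For all integers n, n' with n, n' ≥ max(2k, m+λ₁), the Kostka numbers satisfy K_{λ[n],α(n,k)} = K_{λ[n'],α(n',k)}; that is, the number of semistandard Young tableaux of shape λ[n] = (n−m,λ₁,…,λ_l) and type α(n,k) = (n−k,1,1,…,1) (with k ones) is independent of n in this range. -/
/-- The number of cells of `T` containing the entry `i`. -/
def entryCount (μ : YoungDiagram) (T : SemistandardYoungTableau μ) (i : ℕ) : ℕ :=
  (μ.cells.filter fun c => T c.1 c.2 = i).card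

/-- The Kostka number `K_{μ,α}`: the number of semistandard Young tableaux of shape `μ`
and type `α` (entry `i` appears `α i` times; entries are indexed from `0`). -/
noncomputable def kostka (μ : YoungDiagram) (α : ℕ → ℕ) : ℕ :=
  Nat.card {T : SemistandardYoungTableau μ // ∀ i : ℕ, entryCount μ T i = α i}

/-- The type `α(n,k) = (n−k,1,1,…,1)` with `k` ones. -/
def typeNK (n k : ℕ) : ℕ → ℕ :=
  fun i => if i = 0 then n - k else if i ≤ k then 1 else 0

namespace StmtAux

lemma mem_mu_zero {a : ℕ} {L : List ℕ} {h : (a :: L).SortedGE} {j : ℕ} :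
    ((0, j) ∈ YoungDiagram.ofRowLens (a :: L) h) ↔ j < a := by
  simp [YoungDiagram.mem_ofRowLens]

lemma mem_mu_succ {a : ℕ} {L : List ℕ} {h : (a :: L).SortedGE} {i j : ℕ} :
    ((i + 1, j) ∈ YoungDiagram.ofRowLens (a :: L) h) ↔ ∃ hi : i < L.length, j < L[i] := by
  simp [YoungDiagram.mem_ofRowLens]

lemma le_entry {μ : YoungDiagram} (T : SemistandardYoungTableau μ) :
    ∀ i j, (i, j) ∈ μ → i ≤ T i j := by
  intro i
  induction i with
  | zero => intro j _; exact Nat.zero_le _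
  | succ i ih =>
    intro j hij
    have h1 : (i, j) ∈ μ := μ.up_left_mem (Nat.le_succ i) le_rfl hij
    have h2 := T.col_strict (show i < i + 1 by omega) hij
    have := ih j h1
    omega

lemma entry_le {μ : YoungDiagram} (T : SemistandardYoungTableau μ) (k n : ℕ)
    (hT : ∀ i, entryCount μ T i = typeNK n k i) : ∀ i j, T i j ≤ k := by
  intro i j
  by_contra h
  push_neg at h
  have hc : (i, j) ∈ μ := by
    by_contra hc
    rw [T.zeros hc] at h
    omega
  have h0 : 0 < entryCount μ T (T i j) :=
    Finset.card_pos.2 ⟨(i, j), Finset.mem_filter.2 ⟨(YoungDiagram.mem_cells _).2 hc, rfl⟩⟩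
  rw [hT] at h0
  simp only [typeNK] at h0
  rw [if_neg (by omega), if_neg (by omega)] at h0
  omega


lemma zero_iff {k m n : ℕ} {L : List ℕ} {h1 : ((n - m) :: L).SortedGE}
    (hk : 0 < k) (hmk : m ≤ k) (hn : 2 * k ≤ n)
    (T : SemistandardYoungTableau (YoungDiagram.ofRowLens ((n - m) :: L) h1))
    (hT : ∀ i, entryCount _ T i = typeNK n k i) :
    ∀ j, j < n - m → (T 0 j = 0 ↔ j < n - k) := by
  set Z := (Finset.range (n - m)).filter (fun j => T 0 j = 0) with hZdef
  have hmemZ : ∀ j, j ∈ Z ↔ j < n - m ∧ T 0 j = 0 := by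
    intro j; simp [hZdef]
  have hdc : ∀ a b : ℕ, a ≤ b → b ∈ Z → a ∈ Z := by
    intro a b hab hb
    rw [hmemZ] at hb ⊢
    refine ⟨lt_of_le_of_lt hab hb.1, ?_⟩
    have := T.row_weak_of_le hab (mem_mu_zero.2 hb.1)
    omega
  have hZsub : Z ⊆ Finset.range Z.card := by
    intro j hj
    have hsub : Finset.range (j + 1) ⊆ Z := by
      intro a ha
      exact hdc a j (Nat.lt_succ_iff.1 (Finset.mem_range.1 ha)) hj
    have := Finset.card_le_card hsub
    rw [Finset.card_range] at this
    rw [Finset.mem_range]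
    omega
  have hZeq : Z = Finset.range Z.card :=
    Finset.eq_of_subset_of_card_le hZsub (by rw [Finset.card_range])
  have hcard : Z.card = n - k := by
    have h0 : entryCount _ T 0 = n - k := by rw [hT 0]; simp [typeNK]
    rw [← h0, entryCount]
    apply Finset.card_bij (fun j _ => ((0 : ℕ), j))
    · intro a ha
      rw [hmemZ] at ha
      exact Finset.mem_filter.2 ⟨(YoungDiagram.mem_cells _).2 (mem_mu_zero.2 ha.1), ha.2⟩
    · intro a _ b _ hab
      simpa using hab
    · rintro ⟨i, j⟩ hb
      rw [Finset.mem_filter] at hb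
      have hcell := (YoungDiagram.mem_cells _).1 hb.1
      have hi : i = 0 := by
        by_contra hi
        have := le_entry T i j hcell
        have := hb.2
        simp only at this
        omega
      subst hi
      exact ⟨j, (hmemZ j).2 ⟨mem_mu_zero.1 hcell, hb.2⟩, rfl⟩
  intro j hj
  constructor
  · intro h0
    have : j ∈ Z := (hmemZ j).2 ⟨hj, h0⟩
    rw [hZeq, Finset.mem_range, hcard] at this
    exact this
  · intro h0
    have : j ∈ Z := by
      rw [hZeq, Finset.mem_range, hcard]; exact h0
    exact ((hmemZ j).1 this).2

variable {k m n n' : ℕ} {L : List ℕ}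

/-- The transferred tableau. -/
def transfer (h1 : ((n - m) :: L).SortedGE) (h2 : ((n' - m) :: L).SortedGE)
    (hk : 0 < k) (hmk : m ≤ k) (hsum : L.sum = m) (hn : 2 * k ≤ n) (hn' : 2 * k ≤ n')
    (T : SemistandardYoungTableau (YoungDiagram.ofRowLens ((n - m) :: L) h1))
    (hT : ∀ i, entryCount _ T i = typeNK n k i) :
    SemistandardYoungTableau (YoungDiagram.ofRowLens ((n' - m) :: L) h2) where
  entry i j := if i = 0 then T 0 (j + n - n') else T i j
  row_weak' := by
    intro i j1 j2 hj hcell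
    rcases i with _ | i
    · simp only [if_pos rfl]
      have hj2 : j2 < n' - m := mem_mu_zero.1 hcell
      have harg : j2 + n - n' < n - m := by omega
      exact T.row_weak_of_le (by omega) (mem_mu_zero.2 harg)
    · simp only [Nat.succ_ne_zero, if_neg (Nat.succ_ne_zero i)]
      exact T.row_weak' hj (mem_mu_succ.2 (mem_mu_succ.1 hcell))
  col_strict' := by
    intro i1 i2 j hi hcell
    rcases i2 with _ | i2
    · omega
    obtain ⟨hlen, hjL⟩ := mem_mu_succ.1 hcell
    have hcell' : ((i2 + 1, j) : ℕ × ℕ) ∈ YoungDiagram.ofRowLens ((n - m) :: L) h1 :=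
      mem_mu_succ.2 ⟨hlen, hjL⟩
    have hjk : j < k := by
      have hmem : L[i2] ∈ L := List.getElem_mem hlen
      have := List.single_le_sum (fun x _ => Nat.zero_le x) _ hmem
      omega
    rcases i1 with _ | i1
    · show (if (0:ℕ) = 0 then T 0 (j + n - n') else T 0 j) < (if i2 + 1 = 0 then T 0 (j + n - n') else T (i2 + 1) j)
      rw [if_pos rfl, if_neg (Nat.succ_ne_zero i2)]
      have h0 : T 0 (j + n - n') = 0 := by
        have harg : j + n - n' < n - k := by omega
        exact (zero_iff hk hmk hn T hT _ (by omega)).2 harg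
      have := le_entry T (i2 + 1) j hcell'
      omega
    · simp only [if_neg (Nat.succ_ne_zero i1), if_neg (Nat.succ_ne_zero i2)]
      exact T.col_strict' hi hcell'
  zeros' := by
    intro i j hcell
    rcases i with _ | i
    · simp only [if_pos rfl]
      apply T.zeros
      intro hmem
      have := mem_mu_zero.1 hmem
      have hj : ¬ j < n' - m := fun h => hcell (mem_mu_zero.2 h)
      omega
    · simp only [if_neg (Nat.succ_ne_zero i)]
      apply T.zeros
      intro hmem
      exact hcell (mem_mu_succ.2 (mem_mu_succ.1 hmem))

lemma transfer_apply0 (h1 : ((n - m) :: L).SortedGE) (h2 : ((n' - m) :: L).SortedGE)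
    (hk : 0 < k) (hmk : m ≤ k) (hsum : L.sum = m) (hn : 2 * k ≤ n) (hn' : 2 * k ≤ n')
    (T : SemistandardYoungTableau (YoungDiagram.ofRowLens ((n - m) :: L) h1))
    (hT : ∀ i, entryCount _ T i = typeNK n k i) (j : ℕ) :
    transfer h1 h2 hk hmk hsum hn hn' T hT 0 j = T 0 (j + n - n') := by
  show (if (0 : ℕ) = 0 then T 0 (j + n - n') else T 0 j) = T 0 (j + n - n')
  exact if_pos rfl

lemma transfer_applyS (h1 : ((n - m) :: L).SortedGE) (h2 : ((n' - m) :: L).SortedGE)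
    (hk : 0 < k) (hmk : m ≤ k) (hsum : L.sum = m) (hn : 2 * k ≤ n) (hn' : 2 * k ≤ n')
    (T : SemistandardYoungTableau (YoungDiagram.ofRowLens ((n - m) :: L) h1))
    (hT : ∀ i, entryCount _ T i = typeNK n k i) (i j : ℕ) :
    transfer h1 h2 hk hmk hsum hn hn' T hT (i + 1) j = T (i + 1) j := by
  show (if i + 1 = 0 then T 0 (j + n - n') else T (i + 1) j) = T (i + 1) j
  exact if_neg (Nat.succ_ne_zero i)

lemma entryCount_transfer (h1 : ((n - m) :: L).SortedGE)
    (h2 : ((n' - m) :: L).SortedGE)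
    (hk : 0 < k) (hmk : m ≤ k) (hsum : L.sum = m) (hn : 2 * k ≤ n) (hn' : 2 * k ≤ n')
    (T : SemistandardYoungTableau (YoungDiagram.ofRowLens ((n - m) :: L) h1))
    (hT : ∀ i, entryCount _ T i = typeNK n k i) (e : ℕ) :
    entryCount _ (transfer h1 h2 hk hmk hsum hn hn' T hT) e = typeNK n' k e := by
  set S := transfer h1 h2 hk hmk hsum hn hn' T hT with hS
  have hS0 : ∀ j, S 0 j = T 0 (j + n - n') := transfer_apply0 h1 h2 hk hmk hsum hn hn' T hT
  have hSS : ∀ i j, S (i + 1) j = T (i + 1) j := transfer_applyS h1 h2 hk hmk hsum hn hn' T hT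
  rcases Nat.eq_zero_or_pos e with he | he
  · subst he
    have hset : ((YoungDiagram.ofRowLens ((n' - m) :: L) h2).cells.filter
        fun c => S c.1 c.2 = 0) =
        (Finset.range (n' - k)).map ⟨fun j => ((0 : ℕ), j), fun a b h => by simpa using h⟩ := by
      ext ⟨i, j⟩
      rw [Finset.mem_filter, Finset.mem_map]
      constructor
      · rintro ⟨hcells, hval⟩
        dsimp only at hval
        have hcell := (YoungDiagram.mem_cells _).1 hcells
        rcases i with _ | i
        · rw [hS0] at hval
          have hj : j < n' - m := mem_mu_zero.1 hcell
          have hjk : j < n' - k := by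
            by_contra hge
            have := (zero_iff hk hmk hn T hT (j + n - n') (by omega)).1 hval
            omega
          exact ⟨j, Finset.mem_range.2 hjk, rfl⟩
        · exfalso
          rw [hSS] at hval
          have := le_entry T (i + 1) j (mem_mu_succ.2 (mem_mu_succ.1 hcell))
          omega
      · rintro ⟨a, ha, hpair⟩
        rw [Finset.mem_range] at ha
        obtain ⟨rfl, rfl⟩ : (0 : ℕ) = i ∧ a = j :=
          ⟨congrArg Prod.fst hpair, congrArg Prod.snd hpair⟩
        refine ⟨(YoungDiagram.mem_cells _).2 (mem_mu_zero.2 (by omega)), ?_⟩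
        rw [hS0]
        exact (zero_iff hk hmk hn T hT (a + n - n') (by omega)).2 (by omega)
    rw [entryCount, hset, Finset.card_map, Finset.card_range]
    simp [typeNK]
  · rcases le_or_gt e k with hek | hek
    · have hge' : ∀ j, ((0 : ℕ), j) ∈ (YoungDiagram.ofRowLens ((n' - m) :: L) h2) →
          S 0 j = e → n' - k ≤ j ∧ j < n' - m := by
        intro j hmem hval
        have hj : j < n' - m := mem_mu_zero.1 hmem
        rw [hS0] at hval
        refine ⟨?_, hj⟩
        by_contra hge
        have := (zero_iff hk hmk hn T hT (j + n - n') (by omega)).2 (by omega)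
        omega
      have hgeT : ∀ j, ((0 : ℕ), j) ∈ (YoungDiagram.ofRowLens ((n - m) :: L) h1) →
          T 0 j = e → n - k ≤ j ∧ j < n - m := by
        intro j hmem hval
        have hj : j < n - m := mem_mu_zero.1 hmem
        refine ⟨?_, hj⟩
        by_contra hge
        have := (zero_iff hk hmk hn T hT j (by omega)).2 (by omega)
        omega
      have hcard : ((YoungDiagram.ofRowLens ((n' - m) :: L) h2).cells.filter
          fun c => S c.1 c.2 = e).card =
          ((YoungDiagram.ofRowLens ((n - m) :: L) h1).cells.filter
          fun c => T c.1 c.2 = e).card := by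
        refine Finset.card_bij'
          (fun c _ => (c.1, if c.1 = 0 then c.2 + n - n' else c.2))
          (fun c _ => (c.1, if c.1 = 0 then c.2 + n' - n else c.2)) ?_ ?_ ?_ ?_
        · rintro ⟨i, j⟩ ha
          rw [Finset.mem_filter] at ha
          obtain ⟨hcells, hval⟩ := ha
          dsimp only at hval ⊢
          have hcell := (YoungDiagram.mem_cells _).1 hcells
          rcases i with _ | i
          · obtain ⟨hjge, hjlt⟩ := hge' j hcell hval
            rw [hS0] at hval
            rw [if_pos rfl]
            refine Finset.mem_filter.2 ⟨(YoungDiagram.mem_cells _).2 (mem_mu_zero.2 ?_), ?_⟩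
            · omega
            · show T 0 (j + n - n') = e
              exact hval
          · rw [hSS] at hval
            rw [if_neg (Nat.succ_ne_zero i)]
            refine Finset.mem_filter.2
              ⟨(YoungDiagram.mem_cells _).2 (mem_mu_succ.2 (mem_mu_succ.1 hcell)), ?_⟩
            show T (i + 1) j = e
            exact hval
        · rintro ⟨i, j⟩ hb
          rw [Finset.mem_filter] at hb
          obtain ⟨hcells, hval⟩ := hb
          dsimp only at hval ⊢
          have hcell := (YoungDiagram.mem_cells _).1 hcells
          rcases i with _ | i
          · obtain ⟨hjge, hjlt⟩ := hgeT j hcell hval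
            rw [if_pos rfl]
            refine Finset.mem_filter.2 ⟨(YoungDiagram.mem_cells _).2 (mem_mu_zero.2 ?_), ?_⟩
            · omega
            show S 0 (j + n' - n) = e
            rw [hS0, show j + n' - n + n - n' = j by omega]
            exact hval
          · rw [if_neg (Nat.succ_ne_zero i)]
            refine Finset.mem_filter.2
              ⟨(YoungDiagram.mem_cells _).2 (mem_mu_succ.2 (mem_mu_succ.1 hcell)), ?_⟩
            show S (i + 1) j = e
            rw [hSS]
            exact hval
        · rintro ⟨i, j⟩ ha
          rw [Finset.mem_filter] at ha
          obtain ⟨hcells, hval⟩ := ha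
          dsimp only at hval ⊢
          have hcell := (YoungDiagram.mem_cells _).1 hcells
          rcases i with _ | i
          · obtain ⟨hjge, hjlt⟩ := hge' j hcell hval
            rw [if_pos rfl, if_pos rfl, show j + n - n' + n' - n = j by omega]
          · rw [if_neg (Nat.succ_ne_zero i), if_neg (Nat.succ_ne_zero i)]
        · rintro ⟨i, j⟩ hb
          rw [Finset.mem_filter] at hb
          obtain ⟨hcells, hval⟩ := hb
          dsimp only at hval ⊢
          have hcell := (YoungDiagram.mem_cells _).1 hcells
          rcases i with _ | i
          · obtain ⟨hjge, hjlt⟩ := hgeT j hcell hval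
            rw [if_pos rfl, if_pos rfl, show j + n' - n + n - n' = j by omega]
          · rw [if_neg (Nat.succ_ne_zero i), if_neg (Nat.succ_ne_zero i)]
      rw [entryCount, hcard,
        show ((YoungDiagram.ofRowLens ((n - m) :: L) h1).cells.filter
          fun c => T c.1 c.2 = e).card = entryCount _ T e from rfl, hT e]
      simp only [typeNK, if_neg (show e ≠ 0 by omega), if_pos hek]
    · have hempty : ((YoungDiagram.ofRowLens ((n' - m) :: L) h2).cells.filter
          fun c => S c.1 c.2 = e) = ∅ := by
        apply Finset.filter_eq_empty_iff.2
        rintro ⟨i, j⟩ _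
        dsimp only
        rcases i with _ | i
        · rw [hS0]
          have := entry_le T k n hT 0 (j + n - n')
          omega
        · rw [hSS]
          have := entry_le T k n hT (i + 1) j
          omega
      rw [entryCount, hempty, Finset.card_empty]
      simp only [typeNK, if_neg (show e ≠ 0 by omega), if_neg (show ¬ e ≤ k by omega)]

lemma transfer_transfer (h1 : ((n - m) :: L).SortedGE) (h2 : ((n' - m) :: L).SortedGE)
    (hk : 0 < k) (hmk : m ≤ k) (hsum : L.sum = m) (hn : 2 * k ≤ n) (hn' : 2 * k ≤ n')
    (T : SemistandardYoungTableau (YoungDiagram.ofRowLens ((n - m) :: L) h1))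
    (hT : ∀ i, entryCount _ T i = typeNK n k i)
    (hT' : ∀ i, entryCount _ (transfer h1 h2 hk hmk hsum hn hn' T hT) i = typeNK n' k i) :
    transfer h2 h1 hk hmk hsum hn' hn (transfer h1 h2 hk hmk hsum hn hn' T hT) hT' = T := by
  ext i j
  rcases i with _ | i
  · rw [transfer_apply0, transfer_apply0]
    rcases le_or_gt n (j + n') with h | h
    · rw [show j + n' - n + n - n' = j by omega]
    · have e1 : T 0 (j + n' - n + n - n') = 0 :=
        (zero_iff hk hmk hn T hT _ (by omega)).2 (by omega)
      have e2 : T 0 j = 0 := (zero_iff hk hmk hn T hT _ (by omega)).2 (by omega)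
      rw [e1, e2]
  · rw [transfer_applyS, transfer_applyS]

end StmtAux

/-- Fix a positive integer `k` and a partition `λ = (λ₁,…,λ_l) ⊢ m` with `m ≤ k`
(given as a sorted list `L` of positive parts). For all `n, n' ≥ max(2k, m+λ₁)`, the
Kostka numbers satisfy `K_{λ[n],α(n,k)} = K_{λ[n'],α(n',k)}`, where
`λ[n] = (n−m,λ₁,…,λ_l)` and `α(n,k) = (n−k,1,…,1)` with `k` ones. -/
theorem stmt18 (k m : ℕ) (hk : 0 < k) (L : List ℕ) (hL : L.Pairwise (· ≥ ·))
    (hpos : ∀ x ∈ L, 0 < x) (hsum : L.sum = m) (hmk : m ≤ k)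
    (n n' : ℕ) (hn : max (2 * k) (m + L.headI) ≤ n) (hn' : max (2 * k) (m + L.headI) ≤ n')
    (h1 : ((n - m) :: L).Pairwise (· ≥ ·)) (h2 : ((n' - m) :: L).Pairwise (· ≥ ·)) :
    kostka (YoungDiagram.ofRowLens ((n - m) :: L) (List.sortedGE_iff_pairwise.mpr h1)) (typeNK n k) =
      kostka (YoungDiagram.ofRowLens ((n' - m) :: L) (List.sortedGE_iff_pairwise.mpr h2)) (typeNK n' k) := by
  have hn2 : 2 * k ≤ n := le_trans (le_max_left _ _) hn
  have hn2' : 2 * k ≤ n' := le_trans (le_max_left _ _) hn'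
  apply Nat.card_congr
  exact {
    toFun := fun T => ⟨StmtAux.transfer (List.sortedGE_iff_pairwise.mpr h1) (List.sortedGE_iff_pairwise.mpr h2) hk hmk hsum hn2 hn2' T.1 T.2,
      StmtAux.entryCount_transfer (List.sortedGE_iff_pairwise.mpr h1) (List.sortedGE_iff_pairwise.mpr h2) hk hmk hsum hn2 hn2' T.1 T.2⟩
    invFun := fun T => ⟨StmtAux.transfer (List.sortedGE_iff_pairwise.mpr h2) (List.sortedGE_iff_pairwise.mpr h1) hk hmk hsum hn2' hn2 T.1 T.2,
      StmtAux.entryCount_transfer (List.sortedGE_iff_pairwise.mpr h2) (List.sortedGE_iff_pairwise.mpr h1) hk hmk hsum hn2' hn2 T.1 T.2⟩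
    left_inv := fun T => Subtype.ext
      (StmtAux.transfer_transfer (List.sortedGE_iff_pairwise.mpr h1) (List.sortedGE_iff_pairwise.mpr h2) hk hmk hsum hn2 hn2' T.1 T.2
        (StmtAux.entryCount_transfer (List.sortedGE_iff_pairwise.mpr h1) (List.sortedGE_iff_pairwise.mpr h2) hk hmk hsum hn2 hn2' T.1 T.2))
    right_inv := fun T => Subtype.ext
      (StmtAux.transfer_transfer (List.sortedGE_iff_pairwise.mpr h2) (List.sortedGE_iff_pairwise.mpr h1) hk hmk hsum hn2' hn2 T.1 T.2
        (StmtAux.entryCount_transfer (List.sortedGE_iff_pairwise.mpr h2) (List.sortedGE_iff_pairwise.mpr h1) hk hmk hsum hn2' hn2 T.1 T.2)) }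
end
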